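/- arXiv:2302.08283 — 8 statements merged into one kernel-verified Lean document; each statement's English description precedes it below -/
import Mathlib

section
/- Let D be a digraph and let X be a subset of V(D) such that every vertex of X has both an in-neighbor and an out-neighbor in D−X. If D−X has an arc-disjoint pair consisting of an out-branching rooted at u and an in-branching rooted at v (with u,v ∈ V(D)\X), then D also has such an arc-disjoint pair of an out-branching rooted at u and an in-branching rooted at v. -/
/-- Two arc sets (relations) are arc-disjoint. -/
def ArcDisjoint {V : Type*} (B₁ B₂ : V → V → Prop) : Prop := ∀ x y, ¬ (B₁ x y ∧ B₂ x y)

/-- `B` is (the arc set of) an out-branching of the digraph with arc relation `A`,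
rooted at `u`: a spanning oriented tree in which every vertex except `u` has
in-degree one and every vertex is reachable from `u`. -/
def IsOutBranching {V : Type*} (A B : V → V → Prop) (u : V) : Prop :=
  (∀ x y, B x y → A x y) ∧ (∀ w, w ≠ u → ∃! x, B x w) ∧ (∀ x, ¬ B x u) ∧
    (∀ w, Relation.ReflTransGen B u w)

/-- `B` is an in-branching of `A` rooted at `v`. -/
def IsInBranching {V : Type*} (A B : V → V → Prop) (v : V) : Prop :=
  (∀ x y, B x y → A x y) ∧ (∀ w, w ≠ v → ∃! y, B w y) ∧ (∀ y, ¬ B v y) ∧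
    (∀ w, Relation.ReflTransGen B w v)

/-- A good `(u,v)`-pair: an arc-disjoint pair of an out-branching rooted at `u`
and an in-branching rooted at `v`. -/
def GoodPair {V : Type*} (A : V → V → Prop) (u v : V) : Prop :=
  ∃ B₁ B₂, IsOutBranching A B₁ u ∧ IsInBranching A B₂ v ∧ ArcDisjoint B₁ B₂

/-- A digraph is strong if every vertex can reach every other vertex. -/
def IsStrong {V : Type*} (A : V → V → Prop) : Prop := ∀ x y, Relation.ReflTransGen A x y

/-- `k`-arc-strong: removing any set of fewer than `k` arcs leaves a strong digraph. -/
def IsKArcStrong {V : Type*} (A : V → V → Prop) (k : ℕ) : Prop :=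
  ∀ F : Set (V × V), F.Finite → F.ncard < k →
    IsStrong fun x y => A x y ∧ (x, y) ∉ F

/-- The composition `D[H₁,…,Hₙ]` of a digraph `D` on index type `ι` with digraphs
`H i` on types `β i`: vertices are `Σ i, β i`; arcs are the internal arcs of each
`H i` together with all arcs from `β i` to `β j` whenever `D i j` and `i ≠ j`. -/
def Comp {ι : Type*} {β : ι → Type*} (D : ι → ι → Prop) (H : ∀ i, β i → β i → Prop) :
    (Σ i, β i) → (Σ i, β i) → Prop :=
  fun x y => (∃ h : y.1 = x.1, H x.1 x.2 (h ▸ y.2)) ∨ (x.1 ≠ y.1 ∧ D x.1 y.1)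

/-- If every vertex of `X` has both an in-neighbor and an out-neighbor outside `X`,
and `D − X` has a good `(u,v)`-pair, then so does `D`. -/
theorem stmt_0 {V : Type*} (A : V → V → Prop) (X : Set V) (u v : V)
    (hu : u ∉ X) (hv : v ∉ X)
    (hX : ∀ x ∈ X, (∃ a, a ∉ X ∧ A a x) ∧ ∃ b, b ∉ X ∧ A x b)
    (h : GoodPair (fun a b : {w : V // w ∉ X} => A a.1 b.1) ⟨u, hu⟩ ⟨v, hv⟩) :
    GoodPair A u v := by
  obtain ⟨B₁, B₂, ⟨hB₁A, hB₁u, hB₁nu, hB₁r⟩, ⟨hB₂A, hB₂v, hB₂nv, hB₂r⟩, hdis⟩ := h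
  classical
  -- choose in/out neighbors
  have hf : ∀ x ∈ X, ∃ a, a ∉ X ∧ A a x := fun x hx => (hX x hx).1
  have hg : ∀ x ∈ X, ∃ b, b ∉ X ∧ A x b := fun x hx => (hX x hx).2
  choose! f hf1 hf2 using hf
  choose! g hg1 hg2 using hg
  have hfspec : ∀ x ∈ X, f x ∉ X ∧ A (f x) x := fun x hx => ⟨hf1 x hx, hf2 x hx⟩
  have hgspec : ∀ x ∈ X, g x ∉ X ∧ A x (g x) := fun x hx => ⟨hg1 x hx, hg2 x hx⟩
  refine ⟨fun x y => (∃ hx : x ∉ X, ∃ hy : y ∉ X, B₁ ⟨x, hx⟩ ⟨y, hy⟩) ∨ (y ∈ X ∧ x = f y),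
          fun x y => (∃ hx : x ∉ X, ∃ hy : y ∉ X, B₂ ⟨x, hx⟩ ⟨y, hy⟩) ∨ (x ∈ X ∧ y = g x),
          ⟨?_, ?_, ?_, ?_⟩, ⟨?_, ?_, ?_, ?_⟩, ?_⟩
  · rintro x y (⟨hx, hy, hb⟩ | ⟨hy, rfl⟩)
    · exact hB₁A _ _ hb
    · exact (hfspec y hy).2
  · intro w hw
    by_cases hwX : w ∈ X
    · refine ⟨f w, Or.inr ⟨hwX, rfl⟩, ?_⟩
      rintro x (⟨hx, hy, _⟩ | ⟨_, rfl⟩)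
      · exact absurd hwX hy
      · rfl
    · obtain ⟨x, hx, hun⟩ := hB₁u ⟨w, hwX⟩ (by simpa [Subtype.ext_iff] using hw)
      refine ⟨x.1, Or.inl ⟨x.2, hwX, hx⟩, ?_⟩
      rintro y (⟨hy, hy2, hb⟩ | ⟨hyX, _⟩)
      · exact congrArg Subtype.val (hun ⟨y, hy⟩ hb)
      · exact absurd hyX hwX
  · rintro x (⟨hx, hy, hb⟩ | ⟨hyX, _⟩)
    · exact hB₁nu ⟨x, hx⟩ hb
    · exact hu hyX
  · intro w
    have lift : ∀ a b : {w : V // w ∉ X}, Relation.ReflTransGen B₁ a b →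
        Relation.ReflTransGen (fun x y => (∃ hx : x ∉ X, ∃ hy : y ∉ X, B₁ ⟨x, hx⟩ ⟨y, hy⟩) ∨ (y ∈ X ∧ x = f y)) a.1 b.1 := by
      intro a b hab
      induction hab with
      | refl => exact Relation.ReflTransGen.refl
      | tail _ hstep ih => exact ih.tail (Or.inl ⟨_, _, hstep⟩)
    by_cases hwX : w ∈ X
    · exact ((lift ⟨u, hu⟩ ⟨f w, (hfspec w hwX).1⟩ (hB₁r _)).tail (Or.inr ⟨hwX, rfl⟩))
    · exact lift ⟨u, hu⟩ ⟨w, hwX⟩ (hB₁r _)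
  · rintro x y (⟨hx, hy, hb⟩ | ⟨hx, rfl⟩)
    · exact hB₂A _ _ hb
    · exact (hgspec x hx).2
  · intro w hw
    by_cases hwX : w ∈ X
    · refine ⟨g w, Or.inr ⟨hwX, rfl⟩, ?_⟩
      rintro y (⟨hx, _, _⟩ | ⟨_, rfl⟩)
      · exact absurd hwX hx
      · rfl
    · obtain ⟨y, hy, hun⟩ := hB₂v ⟨w, hwX⟩ (by simpa [Subtype.ext_iff] using hw)
      refine ⟨y.1, Or.inl ⟨hwX, y.2, hy⟩, ?_⟩
      rintro z (⟨hz1, hz2, hb⟩ | ⟨hxX, _⟩)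
      · exact congrArg Subtype.val (hun ⟨z, hz2⟩ hb)
      · exact absurd hxX hwX
  · rintro y (⟨hx, hy, hb⟩ | ⟨hxX, _⟩)
    · exact hB₂nv ⟨y, hy⟩ hb
    · exact hv hxX
  · intro w
    have lift : ∀ a b : {w : V // w ∉ X}, Relation.ReflTransGen B₂ a b →
        Relation.ReflTransGen (fun x y => (∃ hx : x ∉ X, ∃ hy : y ∉ X, B₂ ⟨x, hx⟩ ⟨y, hy⟩) ∨ (x ∈ X ∧ y = g x)) a.1 b.1 := by
      intro a b hab
      induction hab with
      | refl => exact Relation.ReflTransGen.refl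
      | tail _ hstep ih => exact ih.tail (Or.inl ⟨_, _, hstep⟩)
    by_cases hwX : w ∈ X
    · exact Relation.ReflTransGen.head (Or.inr ⟨hwX, rfl⟩)
        (lift ⟨g w, (hgspec w hwX).1⟩ ⟨v, hv⟩ (hB₂r _))
    · exact lift ⟨w, hwX⟩ ⟨v, hv⟩ (hB₂r _)
  · rintro x y ⟨h1, h2⟩
    rcases h1 with ⟨hx, hy, hb1⟩ | ⟨hyX, _⟩
    · rcases h2 with ⟨hx2, hy2, hb2⟩ | ⟨hxX, _⟩
      · exact hdis ⟨x, hx⟩ ⟨y, hy⟩ ⟨hb1, hb2⟩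
      · exact hx hxX
    · rcases h2 with ⟨_, hy2, _⟩ | ⟨hxX, rfl⟩
      · exact hy2 hyX
      · exact (hgspec x hxX).1 hyX
end

section
/- Let D be a digraph of order n ≥ 2 and let H_1,…,H_n be pairwise vertex-disjoint digraphs, and let Q = D[H_1,…,H_n] be the composition. If Q is k-arc-strong and H_i is an independent set (a digraph with no arcs) with |V(H_i)| ≥ k+1, then the digraph Q′ obtained from Q by deleting one vertex of H_i is also k-arc-strong. -/
/-- If `Q = D[H₁,…,Hₙ]` is `k`-arc-strong and `H i0` is an independent set with at
least `k+1` vertices, then deleting one vertex of `H i0` leaves a `k`-arc-strong digraph. -/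
theorem stmt_2 {ι : Type*} [Fintype ι] {β : ι → Type*} [∀ i, Fintype (β i)]
    (D : ι → ι → Prop) (H : ∀ i, β i → β i → Prop) (k : ℕ)
    (hn : 2 ≤ Fintype.card ι)
    (i0 : ι) (hind : ∀ a b : β i0, ¬ H i0 a b)
    (hcard : k + 1 ≤ Fintype.card (β i0))
    (w0 : β i0)
    (hQ : IsKArcStrong (Comp D H) k) :
    IsKArcStrong
      (fun x y : {z : Σ i, β i // z ≠ ⟨i0, w0⟩} => Comp D H x.1 y.1) k := by
  classical
  intro F hF hFk
  have hk : 0 < k := lt_of_le_of_lt (Nat.zero_le _) hFk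
  -- no internal arcs inside `β i0`
  have hnoint : ∀ a b : β i0, ¬ Comp D H ⟨i0, a⟩ ⟨i0, b⟩ := by
    rintro a b (⟨h, hH⟩ | ⟨hne, -⟩)
    · exact hind a _ hH
    · exact hne rfl
  set F₀ : Set ({z : Σ i, β i // z ≠ ⟨i0, w0⟩} × {z : Σ i, β i // z ≠ ⟨i0, w0⟩}) :=
    {p | p ∈ F ∧ Comp D H p.1.1 p.2.1} with hF₀def
  have hF₀sub : F₀ ⊆ F := fun p hp => hp.1
  have hF₀fin : F₀.Finite := hF.subset hF₀sub
  have hF₀card : F₀.ncard < k := lt_of_le_of_lt (Set.ncard_le_ncard hF₀sub hF) hFk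
  have hmk : ∀ a b : β i0, (⟨i0, a⟩ : Σ i, β i) = ⟨i0, b⟩ → a = b := by
    intro a b h
    exact eq_of_heq (Sigma.mk.inj_iff.1 h).2
  -- choose a vertex w' ≠ w0 of β i0 not touched by F₀
  obtain ⟨w', hw'ne, hw'⟩ : ∃ w' : β i0, w' ≠ w0 ∧
      ∀ p ∈ F₀, p.1.1 ≠ ⟨i0, w'⟩ ∧ p.2.1 ≠ ⟨i0, w'⟩ := by
    by_contra hcon
    push_neg at hcon
    have hcon' : ∀ w' : β i0, w' ≠ w0 → ∃ p ∈ F₀,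
        p.1.1 = (⟨i0, w'⟩ : Σ i, β i) ∨ p.2.1 = (⟨i0, w'⟩ : Σ i, β i) := by
      intro w' hne
      obtain ⟨p, hp, hp2⟩ := hcon w' hne
      by_cases h1 : p.1.1 = (⟨i0, w'⟩ : Σ i, β i)
      · exact ⟨p, hp, Or.inl h1⟩
      · exact ⟨p, hp, Or.inr (hp2 h1)⟩
    -- junk element
    have hb1 : ∃ b1 : β i0, b1 ≠ w0 := by
      have : 1 < Fintype.card (β i0) := lt_of_lt_of_le (by omega) hcard
      exact Fintype.exists_ne_of_one_lt_card this w0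
    obtain ⟨b1, hb1⟩ := hb1
    have hb1' : (⟨i0, b1⟩ : Σ i, β i) ≠ ⟨i0, w0⟩ := fun h => hb1 (hmk _ _ h)
    set junk : {z : Σ i, β i // z ≠ ⟨i0, w0⟩} × {z : Σ i, β i // z ≠ ⟨i0, w0⟩} :=
      (⟨⟨i0, b1⟩, hb1'⟩, ⟨⟨i0, b1⟩, hb1'⟩) with hjunk
    set f : β i0 → {z : Σ i, β i // z ≠ ⟨i0, w0⟩} × {z : Σ i, β i // z ≠ ⟨i0, w0⟩} :=
      fun b => if hb : b ≠ w0 then (hcon' b hb).choose else junk with hfdef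
    have hfmem : ∀ b ∈ {b : β i0 | b ≠ w0}, f b ∈ F₀ := by
      intro b hb
      have hb' : b ≠ w0 := hb
      simp only [hfdef, dif_pos hb']
      exact (hcon' b hb').choose_spec.1
    have hftouch : ∀ b (hb : b ≠ w0),
        (f b).1.1 = (⟨i0, b⟩ : Σ i, β i) ∨ (f b).2.1 = (⟨i0, b⟩ : Σ i, β i) := by
      intro b hb
      simp only [hfdef, dif_pos hb]
      exact (hcon' b hb).choose_spec.2
    have hinj : Set.InjOn f {b : β i0 | b ≠ w0} := by
      intro a ha b hb hab
      have hta := hftouch a ha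
      have htb := hftouch b hb
      rw [hab] at hta
      have hfmem' := hfmem b hb
      rcases hta with h1 | h1 <;> rcases htb with h2 | h2
      · exact hmk _ _ (h1.symm.trans h2)
      · exfalso
        exact hnoint a b (by rw [← h1, ← h2]; exact hfmem'.2)
      · exfalso
        exact hnoint b a (by rw [← h2, ← h1]; exact hfmem'.2)
      · exact hmk _ _ (h1.symm.trans h2)
    have hcount : ({b : β i0 | b ≠ w0}).ncard ≤ F₀.ncard :=
      Set.ncard_le_ncard_of_injOn f hfmem hinj hF₀fin
    have hset : {b : β i0 | b ≠ w0} = {w0}ᶜ := by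
      ext b; simp
    have hcompl : ({w0}ᶜ : Set (β i0)).ncard = Fintype.card (β i0) - 1 := by
      have h1 : (Set.univ : Set (β i0)).ncard = Fintype.card (β i0) := by
        rw [Set.ncard_univ, Nat.card_eq_fintype_card]
      rw [← h1, ← Set.ncard_diff_singleton_of_mem (Set.mem_univ w0)]
      congr 1
      ext b; simp
    rw [hset, hcompl] at hcount
    omega
  have hw'mk : (⟨i0, w'⟩ : Σ i, β i) ≠ ⟨i0, w0⟩ := fun h => hw'ne (hmk _ _ h)
  -- project F₀ down to the big digraph
  set F'' : Set ((Σ i, β i) × (Σ i, β i)) := (fun p => (p.1.1, p.2.1)) '' F₀ with hF''def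
  have hF''fin : F''.Finite := hF₀fin.image _
  have hF''card : F''.ncard < k :=
    lt_of_le_of_lt (Set.ncard_image_le hF₀fin) hF₀card
  have hstrong := hQ F'' hF''fin hF''card
  -- the substitution map
  set φ : (Σ i, β i) → {z : Σ i, β i // z ≠ ⟨i0, w0⟩} :=
    fun z => if h : z = ⟨i0, w0⟩ then ⟨⟨i0, w'⟩, hw'mk⟩ else ⟨z, h⟩ with hφdef
  have hstep : ∀ u v : Σ i, β i, (Comp D H u v ∧ (u, v) ∉ F'') →
      (Comp D H (φ u).1 (φ v).1 ∧ ((φ u), (φ v)) ∉ F) := by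
    rintro u v ⟨huv, hnF⟩
    by_cases hu : u = ⟨i0, w0⟩ <;> by_cases hv : v = ⟨i0, w0⟩
    · subst hu; subst hv; exact absurd huv (hnoint w0 w0)
    · subst hu
      have hcross : i0 ≠ v.1 ∧ D i0 v.1 := by
        rcases huv with ⟨h, hH⟩ | h
        · exact (hind _ _ hH).elim
        · exact h
      have hφu : φ ⟨i0, w0⟩ = ⟨⟨i0, w'⟩, hw'mk⟩ := by simp [hφdef]
      have hφv : φ v = ⟨v, hv⟩ := by simp [hφdef, hv]
      rw [hφu, hφv]
      refine ⟨Or.inr hcross, fun hmem => ?_⟩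
      have : (⟨⟨i0, w'⟩, hw'mk⟩, (⟨v, hv⟩ : {z : Σ i, β i // z ≠ ⟨i0, w0⟩})) ∈ F₀ :=
        ⟨hmem, Or.inr hcross⟩
      exact (hw' _ this).1 rfl
    · subst hv
      have hcross : u.1 ≠ i0 ∧ D u.1 i0 := by
        rcases huv with ⟨h, hH⟩ | h
        · exfalso
          rcases u with ⟨iu, bu⟩
          obtain rfl : i0 = iu := h
          exact hind bu _ hH
        · exact h
      have hφv : φ ⟨i0, w0⟩ = ⟨⟨i0, w'⟩, hw'mk⟩ := by simp [hφdef]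
      have hφu : φ u = ⟨u, hu⟩ := by simp [hφdef, hu]
      rw [hφu, hφv]
      refine ⟨Or.inr hcross, fun hmem => ?_⟩
      have : ((⟨u, hu⟩ : {z : Σ i, β i // z ≠ ⟨i0, w0⟩}), ⟨⟨i0, w'⟩, hw'mk⟩) ∈ F₀ :=
        ⟨hmem, Or.inr hcross⟩
      exact (hw' _ this).2 rfl
    · have hφu : φ u = ⟨u, hu⟩ := by simp [hφdef, hu]
      have hφv : φ v = ⟨v, hv⟩ := by simp [hφdef, hv]
      rw [hφu, hφv]
      refine ⟨huv, fun hmem => ?_⟩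
      exact hnF ⟨(⟨u, hu⟩, ⟨v, hv⟩), ⟨hmem, huv⟩, rfl⟩
  intro x y
  have hpath := hstrong x.1 y.1
  have hlift : Relation.ReflTransGen (fun (a b : {z : Σ i, β i // z ≠ ⟨i0, w0⟩}) =>
      Comp D H a.1 b.1 ∧ (a, b) ∉ F) (φ x.1) (φ y.1) := Relation.ReflTransGen.lift
    (r := fun u v => Comp D H u v ∧ (u, v) ∉ F'')
    (p := fun (a b : {z : Σ i, β i // z ≠ ⟨i0, w0⟩}) => Comp D H a.1 b.1 ∧ (a, b) ∉ F)
    φ hstep _ _ hpath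
  have hφx : φ x.1 = x := by
    simp only [hφdef, dif_neg x.2]
  have hφy : φ y.1 = y := by
    simp only [hφdef, dif_neg y.2]
  rw [hφx, hφy] at hlift
  exact hlift
end

section
/- Let D be a strong digraph of order n ≥ 2 and let H_1,…,H_n be pairwise vertex-disjoint digraphs each having at least k vertices. Then the composition Q = D[H_1,…,H_n] is k-arc-strong. -/
open Relation


lemma aux_bad {ι : Type*} [Fintype ι] {β : ι → Type*} [∀ i, Fintype (β i)]
    (D : ι → ι → Prop) (H : ∀ i, β i → β i → Prop) (k : ℕ)
    (hcard : ∀ i, k ≤ Fintype.card (β i))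
    (F : Set ((Σ i, β i) × (Σ i, β i))) (hFk : F.ncard < k)
    {i j : ι} (hW : Relation.TransGen (fun p q => p ≠ q ∧ D p q) i j) (b : β j) :
    {a : β i | ¬ Relation.ReflTransGen
        (fun x y => Comp D H x y ∧ (x, y) ∉ F) (⟨i, a⟩ : Σ i, β i) ⟨j, b⟩}.ncard
      ≤ {f ∈ F | f.1.1 = i}.ncard := by
  induction hW using Relation.TransGen.head_induction_on with
  | single h =>
    rename_i i
    apply Set.ncard_le_ncard_of_injOn
      (fun a => ((⟨i, a⟩ : Σ i, β i), (⟨j, b⟩ : Σ i, β i)))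
    · intro a ha
      simp only [Set.mem_setOf_eq] at ha
      refine ⟨?_, rfl⟩
      by_contra hFmem
      exact ha (Relation.ReflTransGen.single ⟨Or.inr ⟨h.1, h.2⟩, hFmem⟩)
    · intro a _ a' _ hEq
      simpa using hEq
  | head h' hW ih =>
    rename_i i c
    -- there exists a good vertex in block c
    have hgood : ∃ a₁ : β c, Relation.ReflTransGen
        (fun x y => Comp D H x y ∧ (x, y) ∉ F) (⟨c, a₁⟩ : Σ i, β i) ⟨j, b⟩ := by
      by_contra hno
      push_neg at hno
      have huniv : {a : β c | ¬ Relation.ReflTransGen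
          (fun x y => Comp D H x y ∧ (x, y) ∉ F) (⟨c, a⟩ : Σ i, β i) ⟨j, b⟩}
            = Set.univ := by
        ext a; simpa using hno a
      have h1 : (Set.univ : Set (β c)).ncard ≤ {f ∈ F | f.1.1 = c}.ncard := huniv ▸ ih
      have h2 : {f ∈ F | f.1.1 = c}.ncard ≤ F.ncard :=
        Set.ncard_le_ncard (fun f hf => hf.1) (Set.toFinite F)
      have h3 : (Set.univ : Set (β c)).ncard = Fintype.card (β c) := by
        rw [Set.ncard_univ, Nat.card_eq_fintype_card]
      have := hcard c
      omega
    obtain ⟨a₁, ha₁⟩ := hgood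
    apply Set.ncard_le_ncard_of_injOn
      (fun a => ((⟨i, a⟩ : Σ i, β i), (⟨c, a₁⟩ : Σ i, β i)))
    · intro a ha
      simp only [Set.mem_setOf_eq] at ha
      refine ⟨?_, rfl⟩
      by_contra hFmem
      exact ha (Relation.ReflTransGen.head ⟨Or.inr ⟨h'.1, h'.2⟩, hFmem⟩ ha₁)
    · intro a _ a' _ hEq
      simpa using hEq

lemma aux_trans {ι : Type*} [Fintype ι] (D : ι → ι → Prop)
    (hn : 2 ≤ Fintype.card ι) (hD : ∀ x y, Relation.ReflTransGen D x y) :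
    ∀ i j, Relation.TransGen (fun p q => p ≠ q ∧ D p q) i j := by
  have hR : ∀ i j, Relation.ReflTransGen (fun p q => p ≠ q ∧ D p q) i j := by
    intro i j
    induction hD i j with
    | refl => exact Relation.ReflTransGen.refl
    | tail hstep h ih =>
      rename_i x y
      by_cases hxy : x = y
      · exact hxy ▸ ih
      · exact ih.tail ⟨hxy, h⟩
  have hne : ∀ i j : ι, i ≠ j → Relation.TransGen (fun p q => p ≠ q ∧ D p q) i j := by
    intro i j hij
    rcases (hR i j).cases_tail with h | ⟨c, hc, hstep⟩
    · exact absurd h.symm hij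
    · exact Relation.TransGen.tail' hc hstep
  intro i j
  by_cases hij : i = j
  · subst hij
    obtain ⟨m, hm⟩ := Fintype.exists_ne_of_one_lt_card (by omega) i
    exact (hne i m (Ne.symm hm)).trans (hne m i hm)
  · exact hne i j hij

/-- If `D` is strong of order `n ≥ 2` and each `H i` has at least `k` vertices, then
the composition `D[H₁,…,Hₙ]` is `k`-arc-strong. -/
theorem stmt_3 {ι : Type*} [Fintype ι] {β : ι → Type*} [∀ i, Fintype (β i)]
    (D : ι → ι → Prop) (H : ∀ i, β i → β i → Prop) (k : ℕ)
    (hn : 2 ≤ Fintype.card ι) (hD : IsStrong D)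
    (hcard : ∀ i, k ≤ Fintype.card (β i)) :
    IsKArcStrong (Comp D H) k := by
  intro F _ hFk
  rintro ⟨i, a⟩ ⟨j, b⟩
  have htr := aux_trans D hn hD
  obtain ⟨i₁, hstep, -⟩ := Relation.TransGen.head'_iff.mp (htr i i)
  -- bad sets in block i₁
  set bad1 : Set (β i₁) := {a₁ : β i₁ | ¬ Relation.ReflTransGen
      (fun x y => Comp D H x y ∧ (x, y) ∉ F) (⟨i₁, a₁⟩ : Σ i, β i) ⟨j, b⟩} with hbad1
  set bad2 : Set (β i₁) :=
      {a₁ : β i₁ | ((⟨i, a⟩ : Σ i, β i), (⟨i₁, a₁⟩ : Σ i, β i)) ∈ F} with hbad2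
  have h1 : bad1.ncard ≤ {f ∈ F | f.1.1 = i₁}.ncard :=
    aux_bad D H k hcard F hFk (htr i₁ j) b
  have h2 : bad2.ncard ≤ {f ∈ F | f.1.1 = i}.ncard := by
    apply Set.ncard_le_ncard_of_injOn
      (fun a₁ => ((⟨i, a⟩ : Σ i, β i), (⟨i₁, a₁⟩ : Σ i, β i)))
    · intro a₁ ha₁
      exact ⟨ha₁, rfl⟩
    · intro a₁ _ a₁' _ hEq
      simpa using hEq
  have hdisj : Disjoint {f ∈ F | f.1.1 = i₁} {f ∈ F | f.1.1 = i} := by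
    rw [Set.disjoint_left]
    rintro f ⟨-, h₁⟩ ⟨-, h₂⟩
    exact hstep.1 (h₂ ▸ h₁)
  have hunion : {f ∈ F | f.1.1 = i₁}.ncard + {f ∈ F | f.1.1 = i}.ncard
      = ({f ∈ F | f.1.1 = i₁} ∪ {f ∈ F | f.1.1 = i}).ncard :=
    (Set.ncard_union_eq hdisj).symm
  have hsub : ({f ∈ F | f.1.1 = i₁} ∪ {f ∈ F | f.1.1 = i}).ncard ≤ F.ncard :=
    Set.ncard_le_ncard (by rintro f (⟨hf, -⟩ | ⟨hf, -⟩) <;> exact hf) (Set.toFinite F)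
  have hsmall : (bad1 ∪ bad2).ncard < Fintype.card (β i₁) := by
    have := Set.ncard_union_le bad1 bad2
    have := hcard i₁
    omega
  have hex : ∃ a₁ : β i₁, a₁ ∉ bad1 ∪ bad2 := by
    by_contra hno
    push_neg at hno
    have : (bad1 ∪ bad2) = Set.univ := by ext a₁; simpa using hno a₁
    rw [this, Set.ncard_univ, Nat.card_eq_fintype_card] at hsmall
    omega
  obtain ⟨a₁, ha₁⟩ := hex
  simp only [Set.mem_union, hbad1, hbad2, Set.mem_setOf_eq, not_or, not_not] at ha₁
  exact Relation.ReflTransGen.head ⟨Or.inr ⟨hstep.1, hstep.2⟩, ha₁.2⟩ ha₁.1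
end

section
/- Let Q be the digraph C_3[H(u), H(v), {z}], where C_3 is the directed 3-cycle on vertices x→y→z→x, H(u) is substituted for x with distinguished vertex u, H(v) is substituted for y with distinguished vertex v, and a single vertex z is substituted for the third vertex. Suppose that every vertex of H(u) other than u has in-degree exactly one in Q, and every vertex of H(v) other than v has out-degree exactly one in Q. Then Q has no good (u,v)-pair. -/
/-- The composition `C₃[H(u), H(v), {z}]`: vertices `Hu ⊕ Hv ⊕ Unit` with internal
arcs `RU`, `RV`, all arcs `Hu → Hv`, `Hv → z` and `z → Hu`. -/
def Q6 {Hu Hv : Type*} (RU : Hu → Hu → Prop) (RV : Hv → Hv → Prop) :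
    (Hu ⊕ Hv ⊕ Unit) → (Hu ⊕ Hv ⊕ Unit) → Prop
  | Sum.inl a, Sum.inl b => RU a b
  | Sum.inl _, Sum.inr (Sum.inl _) => True
  | Sum.inr (Sum.inl a), Sum.inr (Sum.inl b) => RV a b
  | Sum.inr (Sum.inl _), Sum.inr (Sum.inr _) => True
  | Sum.inr (Sum.inr _), Sum.inl _ => True
  | _, _ => False


lemma noReachOut {V : Type*} (B : V → V → Prop) (S : V → Prop) (r : V) (hr : ¬ S r)
    (hcl : ∀ w, S w → ∀ x, B x w → S x) : ∀ w, Relation.ReflTransGen B r w → ¬ S w := by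
  intro w h
  induction h with
  | refl => exact hr
  | tail _ h2 ih => intro hS; exact ih (hcl _ hS _ h2)

lemma noReachIn {V : Type*} (B : V → V → Prop) (S : V → Prop) (t : V) (ht : ¬ S t)
    (hcl : ∀ w, S w → ∀ y, B w y → S y) : ∀ w, Relation.ReflTransGen B w t → ¬ S w := by
  intro w h
  induction h using Relation.ReflTransGen.head_induction_on with
  | refl => exact ht
  | head h1 _ ih => intro hS; exact ih (hcl _ hS _ h1)

/-- If in `Q = C₃[H(u), H(v), {z}]` every vertex of `H(u)` other than `u` has
in-degree exactly one and every vertex of `H(v)` other than `v` has out-degree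
exactly one, then `Q` has no good `(u,v)`-pair. -/
theorem stmt_6 {Hu Hv : Type*} [Fintype Hu] [Fintype Hv]
    (RU : Hu → Hu → Prop) (RV : Hv → Hv → Prop) (u : Hu) (v : Hv)
    (hin : ∀ a : Hu, a ≠ u → ∃! w, Q6 RU RV w (Sum.inl a))
    (hout : ∀ b : Hv, b ≠ v → ∃! w, Q6 RU RV (Sum.inr (Sum.inl b)) w) :
    ¬ GoodPair (Q6 RU RV) (Sum.inl u) (Sum.inr (Sum.inl v)) := by
  rintro ⟨B₁, B₂, ⟨hB₁A, hB₁in, hB₁root, hB₁reach⟩, ⟨hB₂A, hB₂out, hB₂root, hB₂reach⟩, hdisj⟩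
  -- every Q-arc into a non-u vertex of Hu comes from z
  have hinz : ∀ a : Hu, a ≠ u → ∀ x, Q6 RU RV x (Sum.inl a) → x = Sum.inr (Sum.inr ()) := by
    intro a ha x hx
    obtain ⟨w, hw, hw'⟩ := hin a ha
    have h1 := hw' x hx
    have h2 := hw' (Sum.inr (Sum.inr ())) trivial
    rw [h1, ← h2]
  -- every Q-arc out of a non-v vertex of Hv goes to z
  have houtz : ∀ b : Hv, b ≠ v → ∀ y, Q6 RU RV (Sum.inr (Sum.inl b)) y → y = Sum.inr (Sum.inr ()) := by
    intro b hb y hy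
    obtain ⟨w, hw, hw'⟩ := hout b hb
    have h1 := hw' y hy
    have h2 := hw' (Sum.inr (Sum.inr ())) trivial
    rw [h1, ← h2]
  -- B₁ contains the arc z → a for each a ≠ u
  have hB1za : ∀ a : Hu, a ≠ u → B₁ (Sum.inr (Sum.inr ())) (Sum.inl a) := by
    intro a ha
    obtain ⟨x, hx, -⟩ := hB₁in (Sum.inl a) (by simpa using ha)
    rwa [hinz a ha x (hB₁A _ _ hx)] at hx
  -- hence B₂ has no arcs into Hu \ {u}
  have hB2za : ∀ a : Hu, a ≠ u → ∀ x, ¬ B₂ x (Sum.inl a) := by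
    intro a ha x hx
    have hxz := hinz a ha x (hB₂A _ _ hx)
    subst hxz
    exact hdisj _ _ ⟨hB1za a ha, hx⟩
  -- B₂ contains the arc b → z for each b ≠ v
  have hB2bz : ∀ b : Hv, b ≠ v → B₂ (Sum.inr (Sum.inl b)) (Sum.inr (Sum.inr ())) := by
    intro b hb
    obtain ⟨y, hy, -⟩ := hB₂out (Sum.inr (Sum.inl b)) (by simpa using hb)
    rwa [houtz b hb y (hB₂A _ _ hy)] at hy
  -- hence B₁ has no arcs out of Hv \ {v}
  have hB1bz : ∀ b : Hv, b ≠ v → ∀ y, ¬ B₁ (Sum.inr (Sum.inl b)) y := by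
    intro b hb y hy
    have hyz := houtz b hb y (hB₁A _ _ hy)
    subst hyz
    exact hdisj _ _ ⟨hy, hB2bz b hb⟩
  -- B₂'s out-arc of z goes to u
  obtain ⟨y, hy, hyu⟩ := hB₂out (Sum.inr (Sum.inr ())) (by simp)
  have hyeq : y = Sum.inl u := by
    rcases y with a | b | t
    · rcases eq_or_ne a u with rfl | ha
      · rfl
      · exact absurd hy (hB2za a ha _)
    · exact (hB₂A _ _ hy).elim
    · exact (hB₂A _ _ hy).elim
  have hB2z_uniq : ∀ y', B₂ (Sum.inr (Sum.inr ())) y' → y' = Sum.inl u :=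
    fun y' h => (hyu y' h).trans hyeq
  -- B₁'s in-arc of z comes from v
  obtain ⟨x, hx, hxu⟩ := hB₁in (Sum.inr (Sum.inr ())) (by simp)
  have hxeq : x = Sum.inr (Sum.inl v) := by
    rcases x with a | b | t
    · exact (hB₁A _ _ hx).elim
    · rcases eq_or_ne b v with rfl | hb
      · rfl
      · exact absurd hx (hB1bz b hb _)
    · exact (hB₁A _ _ hx).elim
  have hB1z_uniq : ∀ x', B₁ x' (Sum.inr (Sum.inr ())) → x' = Sum.inr (Sum.inl v) :=
    fun x' h => (hxu x' h).trans hxeq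
  -- B₂'s out-arc of u goes to v
  obtain ⟨y₂, hy₂, hy₂u⟩ := hB₂out (Sum.inl u) (by simp)
  have hy₂eq : y₂ = Sum.inr (Sum.inl v) := by
    rcases y₂ with a | b | t
    · rcases eq_or_ne a u with rfl | ha
      · have hno := noReachIn B₂ (· = Sum.inl a) (Sum.inr (Sum.inl v)) (by simp)
          (fun w hw y' hy' => by subst hw; exact hy₂u y' hy')
          (Sum.inl a) (hB₂reach (Sum.inl a))
        exact absurd rfl hno
      · exact absurd hy₂ (hB2za a ha _)
    · rcases eq_or_ne b v with rfl | hb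
      · rfl
      · have hcl : ∀ w, (w = Sum.inl u ∨ w = Sum.inr (Sum.inl b) ∨ w = Sum.inr (Sum.inr ())) →
            ∀ y', B₂ w y' → (y' = Sum.inl u ∨ y' = Sum.inr (Sum.inl b) ∨ y' = Sum.inr (Sum.inr ())) := by
          rintro w (rfl | rfl | rfl) y' hy'
          · exact Or.inr (Or.inl (hy₂u y' hy'))
          · exact Or.inr (Or.inr (houtz b hb y' (hB₂A _ _ hy')))
          · exact Or.inl (hB2z_uniq y' hy')
        have hno := noReachIn B₂
          (fun w => w = Sum.inl u ∨ w = Sum.inr (Sum.inl b) ∨ w = Sum.inr (Sum.inr ()))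
          (Sum.inr (Sum.inl v))
          (by rintro (h | h | h)
              · cases h
              · exact hb (Sum.inl.inj (Sum.inr.inj h)).symm
              · cases h) hcl
          (Sum.inl u) (hB₂reach (Sum.inl u))
        exact absurd (Or.inl rfl) hno
    · exact (hB₂A _ _ hy₂).elim
  have hB2uv : B₂ (Sum.inl u) (Sum.inr (Sum.inl v)) := hy₂eq ▸ hy₂
  -- B₁'s in-arc of v comes from u
  obtain ⟨x₂, hx₂, hx₂u⟩ := hB₁in (Sum.inr (Sum.inl v)) (by simp)
  have hx₂eq : x₂ = Sum.inl u := by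
    rcases x₂ with a | b | t
    · rcases eq_or_ne a u with rfl | ha
      · rfl
      · have hcl : ∀ w, (w = Sum.inl a ∨ w = Sum.inr (Sum.inl v) ∨ w = Sum.inr (Sum.inr ())) →
            ∀ x', B₁ x' w → (x' = Sum.inl a ∨ x' = Sum.inr (Sum.inl v) ∨ x' = Sum.inr (Sum.inr ())) := by
          rintro w (rfl | rfl | rfl) x' hx'
          · exact Or.inr (Or.inr (hinz a ha x' (hB₁A _ _ hx')))
          · exact Or.inl (hx₂u x' hx')
          · exact Or.inr (Or.inl (hB1z_uniq x' hx'))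
        have hno := noReachOut B₁
          (fun w => w = Sum.inl a ∨ w = Sum.inr (Sum.inl v) ∨ w = Sum.inr (Sum.inr ()))
          (Sum.inl u)
          (by rintro (h | h | h)
              · exact ha (Sum.inl.inj h).symm
              · cases h
              · cases h) hcl
          (Sum.inr (Sum.inl v)) (hB₁reach _)
        exact absurd (Or.inr (Or.inl rfl)) hno
    · rcases eq_or_ne b v with rfl | hb
      · have hno := noReachOut B₁ (· = Sum.inr (Sum.inl b)) (Sum.inl u) (by simp)
          (fun w hw x' hx' => by subst hw; exact hx₂u x' hx')
          (Sum.inr (Sum.inl b)) (hB₁reach _)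
        exact absurd rfl hno
      · exact absurd hx₂ (hB1bz b hb _)
    · exact (hB₁A _ _ hx₂).elim
  have hB1uv : B₁ (Sum.inl u) (Sum.inr (Sum.inl v)) := hx₂eq ▸ hx₂
  exact hdisj _ _ ⟨hB1uv, hB2uv⟩
end

section
/- Let S be a strong semicomplete digraph on s ≥ 2 vertices and let H_1,…,H_s be arbitrary pairwise vertex-disjoint digraphs. Let Q = S[H_1,…,H_s] and let u, v be vertices of Q with either u = v or H(u) ≠ H(v), where H(x) denotes the digraph H_i containing x, and assume that the corresponding vertices u_S, v_S of S satisfy: S has a good (u_S,v_S)-pair. Then Q has a good (u,v)-pair which uses no arc lying inside any H_i. -/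
private lemma aux_eq {V : Type*} {B : V → V → Prop} {w a : V}
    (hpar : ∀ x, B x w → x = w) (h : Relation.ReflTransGen B a w) : a = w := by
  induction h using Relation.ReflTransGen.head_induction_on with
  | refl => rfl
  | head hab _ ih => exact hpar _ (by rwa [ih] at hab)

private lemma out_noloop {V : Type*} {A B : V → V → Prop} {u : V}
    (h : IsOutBranching A B u) : ∀ x y, B x y → x ≠ y := by
  rintro x y hxy rfl
  have hxu : x ≠ u := fun he => h.2.2.1 x (he ▸ hxy)
  have hpar : ∀ z, B z x → z = x := fun z hz => (h.2.1 x hxu).unique hz hxy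
  exact hxu (aux_eq hpar (h.2.2.2 x)).symm

private lemma in_to_out {V : Type*} {A B : V → V → Prop} {v : V}
    (h : IsInBranching A B v) : IsOutBranching (flip A) (flip B) v := by
  refine ⟨fun x y hxy => h.1 y x hxy, fun w hw => h.2.1 w hw, fun x => h.2.2.1 x, fun w => ?_⟩
  exact Relation.reflTransGen_swap.mpr (h.2.2.2 w)

private lemma exists_in_nb {V : Type*} {S : V → V → Prop} {a b : V}
    (hne : a ≠ b) (h : Relation.ReflTransGen S a b) : ∃ w, w ≠ b ∧ S w b := by
  induction h with
  | refl => exact absurd rfl hne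
  | @tail c d h' harc ih =>
    by_cases hcb : c = d
    · subst hcb; exact ih hne
    · exact ⟨c, hcb, harc⟩

/-- If `S` is a strong semicomplete digraph with a good `(u_S, v_S)`-pair and
`u = v` or `u, v` lie in different `H i`'s, then `Q = S[H₁,…,H_s]` has a good
`(u,v)`-pair using no arc lying inside any `H i`. -/
theorem stmt_10 {ι : Type*} [Fintype ι] {β : ι → Type*} [∀ i, Fintype (β i)]
    [∀ i, Nonempty (β i)]
    (S : ι → ι → Prop) (H : ∀ i, β i → β i → Prop)
    (hs : 2 ≤ Fintype.card ι)
    (hsemi : ∀ i j, i ≠ j → S i j ∨ S j i)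
    (hstrong : IsStrong S)
    (u v : Σ i, β i) (huv : u = v ∨ u.1 ≠ v.1)
    (hS : GoodPair S u.1 v.1) :
    ∃ B₁ B₂, IsOutBranching (Comp S H) B₁ u ∧ IsInBranching (Comp S H) B₂ v ∧
      ArcDisjoint B₁ B₂ ∧
      ∀ x y : Σ i, β i, x.1 = y.1 → ¬ B₁ x y ∧ ¬ B₂ x y := by
  classical
  obtain ⟨B1, B2, hO, hI, hD⟩ := hS
  have hB1ne : ∀ i j, B1 i j → i ≠ j := out_noloop hO
  have hB2ne : ∀ i j, B2 i j → i ≠ j := fun i j h2 => (out_noloop (in_to_out hI) j i h2).symm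
  have : Nontrivial ι := Fintype.one_lt_card_iff_nontrivial.mp hs
  obtain ⟨a, ha⟩ := exists_ne u.1
  obtain ⟨w, hw, hwS⟩ : ∃ w, w ≠ u.1 ∧ S w u.1 := exists_in_nb ha (hstrong a u.1)
  obtain ⟨b, hb⟩ := exists_ne v.1
  obtain ⟨w', hw', hw'S⟩ : ∃ w', w' ≠ v.1 ∧ S v.1 w' :=
    exists_in_nb hb (Relation.reflTransGen_swap.mpr (hstrong v.1 b) :
      Relation.ReflTransGen (Function.swap S) b v.1)
  set R : ι → Σ i, β i :=
    fun i => if h : i = u.1 then u else if h' : i = v.1 then v else ⟨i, Classical.arbitrary _⟩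
    with hRdef
  have hR1 : ∀ i, (R i).1 = i := by
    intro i
    simp only [hRdef]
    split_ifs with h h'
    · exact h.symm
    · exact h'.symm
    · rfl
  have hRu : R u.1 = u := by simp [hRdef]
  have hRv : R v.1 = v := by
    rcases huv with h | h
    · subst h; exact hRu
    · rw [hRdef]; simp [Ne.symm h]
  have hRR : ∀ i, R ((R i).1) = R i := fun i => congrArg R (hR1 i)
  refine ⟨fun x y => (x = R x.1 ∧ B1 x.1 y.1) ∨ (x = R w ∧ y.1 = u.1 ∧ y ≠ u),
          fun x y => (y = R y.1 ∧ B2 x.1 y.1) ∨ (y = R w' ∧ x.1 = v.1 ∧ x ≠ v),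
          ⟨?_, ?_, ?_, ?_⟩, ⟨?_, ?_, ?_, ?_⟩, ?_, ?_⟩
  · -- B₁ ⊆ Comp S H
    rintro x y (⟨hx, h1⟩ | ⟨hx, hy1, hy⟩)
    · exact Or.inr ⟨hB1ne _ _ h1, hO.1 _ _ h1⟩
    · have hx1 : x.1 = w := by rw [hx, hR1]
      exact Or.inr ⟨by rw [hx1, hy1]; exact hw, by rw [hx1, hy1]; exact hwS⟩
  · -- unique in-arc in B₁
    intro z hz
    by_cases hj : z.1 = u.1
    · refine ⟨R w, Or.inr ⟨rfl, hj, hz⟩, ?_⟩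
      rintro x (⟨hx, h1⟩ | ⟨hx, _, _⟩)
      · exact absurd (hj ▸ h1) (hO.2.2.1 x.1)
      · exact hx
    · obtain ⟨p, hp, hpu⟩ := hO.2.1 z.1 hj
      refine ⟨R p, Or.inl ⟨(hRR p).symm, by rw [hR1]; exact hp⟩, ?_⟩
      rintro x (⟨hx, h1⟩ | ⟨_, hy1, _⟩)
      · rw [hx, hpu x.1 h1]
      · exact absurd hy1 hj
  · -- no in-arc to u
    rintro x (⟨_, h1⟩ | ⟨_, _, hy⟩)
    · exact hO.2.2.1 x.1 h1
    · exact hy rfl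
  · -- reachability from u
    have key : ∀ i, Relation.ReflTransGen B1 u.1 i →
        Relation.ReflTransGen
          (fun x y => (x = R x.1 ∧ B1 x.1 y.1) ∨ (x = R w ∧ y.1 = u.1 ∧ y ≠ u)) u (R i) := by
      intro i h
      induction h with
      | refl => rw [hRu]
      | tail h' harc ih =>
        exact ih.tail (Or.inl ⟨(hRR _).symm, by rw [hR1, hR1]; exact harc⟩)
    intro z
    by_cases hz : z = u
    · rw [hz]
    · by_cases hj : z.1 = u.1
      · exact (key w (hO.2.2.2 w)).tail (Or.inr ⟨rfl, hj, hz⟩)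
      · obtain ⟨p, hp, _⟩ := hO.2.1 z.1 hj
        exact (key p (hO.2.2.2 p)).tail (Or.inl ⟨(hRR p).symm, by rw [hR1]; exact hp⟩)
  · -- B₂ ⊆ Comp S H
    rintro x y (⟨hy, h2⟩ | ⟨hy, hx1, hx⟩)
    · exact Or.inr ⟨hB2ne _ _ h2, hI.1 _ _ h2⟩
    · have hy1 : y.1 = w' := by rw [hy, hR1]
      exact Or.inr ⟨by rw [hx1, hy1]; exact Ne.symm hw', by rw [hx1, hy1]; exact hw'S⟩
  · -- unique out-arc in B₂
    intro z hz
    by_cases hj : z.1 = v.1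
    · refine ⟨R w', Or.inr ⟨rfl, hj, hz⟩, ?_⟩
      rintro y (⟨hy, h2⟩ | ⟨hy, _, _⟩)
      · exact absurd (hj ▸ h2) (hI.2.2.1 y.1)
      · exact hy
    · obtain ⟨c, hc, hcu⟩ := hI.2.1 z.1 hj
      refine ⟨R c, Or.inl ⟨(hRR c).symm, by rw [hR1]; exact hc⟩, ?_⟩
      rintro y (⟨hy, h2⟩ | ⟨_, hx1, _⟩)
      · rw [hy, hcu y.1 h2]
      · exact absurd hx1 hj
  · -- no out-arc from v
    rintro y (⟨_, h2⟩ | ⟨_, _, hx⟩)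
    · exact hI.2.2.1 y.1 h2
    · exact hx rfl
  · -- reachability to v
    have key : ∀ i, Relation.ReflTransGen B2 i v.1 →
        Relation.ReflTransGen
          (fun x y => (y = R y.1 ∧ B2 x.1 y.1) ∨ (y = R w' ∧ x.1 = v.1 ∧ x ≠ v)) (R i) v := by
      intro i h
      induction h using Relation.ReflTransGen.head_induction_on with
      | refl => rw [hRv]
      | head harc _ ih =>
        exact Relation.ReflTransGen.head
          (Or.inl ⟨(hRR _).symm, by rw [hR1, hR1]; exact harc⟩) ih
    intro z
    by_cases hz : z = v
    · rw [hz]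
    · by_cases hj : z.1 = v.1
      · exact Relation.ReflTransGen.head (Or.inr ⟨rfl, hj, hz⟩) (key w' (hI.2.2.2 w'))
      · obtain ⟨c, hc, _⟩ := hI.2.1 z.1 hj
        exact Relation.ReflTransGen.head
          (Or.inl ⟨(hRR c).symm, by rw [hR1]; exact hc⟩) (key c (hI.2.2.2 c))
  · -- arc-disjointness
    rintro x y ⟨(⟨hx, h1⟩ | ⟨hx, hy1, hy⟩), (⟨hy', h2⟩ | ⟨hy', hx1, hxv⟩)⟩
    · exact hD x.1 y.1 ⟨h1, h2⟩
    · exact hxv (by rw [hx, hx1, hRv])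
    · exact hy (by rw [hy', hy1, hRu])
    · have hxw : x.1 = w := by rw [hx, hR1]
      have hwv : w = v.1 := by rw [← hxw]; exact hx1
      exact hxv (by rw [hx, hwv, hRv])
  · -- no internal arcs
    intro x y hxy
    constructor
    · rintro (⟨_, h1⟩ | ⟨hx, hy1, _⟩)
      · exact hB1ne _ _ h1 hxy
      · have : x.1 = w := by rw [hx, hR1]
        exact hw (by rw [← this, hxy, hy1])
    · rintro (⟨_, h2⟩ | ⟨hy, hx1, _⟩)
      · exact hB2ne _ _ h2 hxy
      · have : y.1 = w' := by rw [hy, hR1]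
        exact hw' (by rw [← this, ← hxy, hx1])
end

section
/- Let S be a strong semicomplete digraph and let a, b be vertices (possibly a = b) such that the triple (S,a,b) is of type A: there is a partition V_1,…,V_{2α+1} of V(S) for some α ≥ 1 with b ∈ V_2, a ∈ V_{2α}, all arcs between V_i and V_j with i < j go from V_i to V_j except for precisely one 'backward' arc x_i y_i from V_{2α+2−i} to V_{2α−i} for each i ∈ [2α−1], which goes from the terminal strong component of S⟨V_{2α+2−i}⟩ to the initial strong component of S⟨V_{2α−i}⟩. Then every pair consisting of an out-branching of S rooted at a and an in-branching of S rooted at b must share at least one backward arc; in particular S has no good (a,b)-pair. -/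
/-- Any path whose endpoints straddle a level cut contains an arc crossing the cut downward. -/
lemma cross_lemma {V : Type*} (B : V → V → Prop) (f : V → ℕ) (k : ℕ) :
    ∀ u w, Relation.ReflTransGen B u w → f w ≤ k → k < f u →
      ∃ p q, B p q ∧ f q ≤ k ∧ k < f p := by
  intro u w h
  induction h with
  | refl => intro h1 h2; omega
  | @tail c d _ harc ih =>
    intro hw hu
    by_cases hc : f c ≤ k
    · exact ih hc hu
    · exact ⟨c, d, harc, hw, by omega⟩

/-- If the strong semicomplete digraph `S` (arc relation `A`) is of type A with
respect to `(a,b)` — witnessed by a `1`-based partition index function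
`f : V → ℕ` onto `{1,…,2α+1}`, backward arcs `x i y i` from part `2α+2−i` to part
`2α−i` for `i ∈ [2α−1]` going from the terminal component of the source part to
the initial component of the target part, all other arcs between distinct parts
going forward — then every out-branching rooted at `a` and every in-branching
rooted at `b` share some backward arc; in particular `S` has no good `(a,b)`-pair. -/
theorem stmt_11 {V : Type*} [Fintype V] (A : V → V → Prop) (a b : V)
    (hsemi : ∀ p q : V, p ≠ q → A p q ∨ A q p) (hstrong : IsStrong A)
    (α : ℕ) (hα : 1 ≤ α)
    (f : V → ℕ) (hf : ∀ w, 1 ≤ f w ∧ f w ≤ 2 * α + 1)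
    (hfsurj : ∀ j, 1 ≤ j → j ≤ 2 * α + 1 → ∃ w, f w = j)
    (hb : f b = 2) (ha : f a = 2 * α)
    (x y : ℕ → V)
    (hxy : ∀ i, 1 ≤ i → i ≤ 2 * α - 1 →
      f (x i) = 2 * α + 2 - i ∧ f (y i) = 2 * α - i ∧ A (x i) (y i) ∧
      (∀ w, f w = 2 * α + 2 - i →
        Relation.ReflTransGen
          (fun p q => A p q ∧ f p = 2 * α + 2 - i ∧ f q = 2 * α + 2 - i) w (x i)) ∧
      (∀ w, f w = 2 * α - i →
        Relation.ReflTransGen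
          (fun p q => A p q ∧ f p = 2 * α - i ∧ f q = 2 * α - i) (y i) w))
    (hforward : ∀ p q, A p q → f q < f p →
      ∃ i, 1 ≤ i ∧ i ≤ 2 * α - 1 ∧ p = x i ∧ q = y i) :
    (∀ B₁ B₂, IsOutBranching A B₁ a → IsInBranching A B₂ b →
      ∃ i, 1 ≤ i ∧ i ≤ 2 * α - 1 ∧ B₁ (x i) (y i) ∧ B₂ (x i) (y i)) ∧
    ¬ GoodPair A a b := by
  clear hsemi hstrong
  have main1 : ∀ B₁ B₂, IsOutBranching A B₁ a → IsInBranching A B₂ b →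
      ∃ i, 1 ≤ i ∧ i ≤ 2 * α - 1 ∧ B₁ (x i) (y i) ∧ B₂ (x i) (y i) := by
    intro B₁ B₂ hB₁ hB₂
    by_contra hno
    push_neg at hno
    -- extracting a backward arc from a downward crossing arc
    have key : ∀ (B : V → V → Prop), (∀ p q, B p q → A p q) →
        ∀ k p q, B p q → f q ≤ k → k < f p → k ≤ 2 * α →
          ∃ i, 1 ≤ i ∧ i ≤ 2 * α - 1 ∧ B (x i) (y i) ∧
            (i = 2 * α - k ∨ i = 2 * α + 1 - k) := by
      intro B hBA k p q hB hq hp hk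
      obtain ⟨i, h1, h2, hp', hq'⟩ := hforward p q (hBA _ _ hB) (by omega)
      obtain ⟨hfx, hfy, -, -, -⟩ := hxy i h1 h2
      subst hp' hq'
      exact ⟨i, h1, h2, hB, by omega⟩
    have crossB₁ : ∀ k, 1 ≤ k → k ≤ 2 * α - 1 →
        ∃ i, 1 ≤ i ∧ i ≤ 2 * α - 1 ∧ B₁ (x i) (y i) ∧
          (i = 2 * α - k ∨ i = 2 * α + 1 - k) := by
      intro k hk1 hk2
      obtain ⟨w, hw⟩ := hfsurj 1 le_rfl (by omega)
      obtain ⟨p, q, hB, hq, hp⟩ :=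
        cross_lemma B₁ f k a w (hB₁.2.2.2 w) (by omega) (by omega)
      exact key B₁ hB₁.1 k p q hB hq hp (by omega)
    have crossB₂ : ∀ k, 2 ≤ k → k ≤ 2 * α →
        ∃ i, 1 ≤ i ∧ i ≤ 2 * α - 1 ∧ B₂ (x i) (y i) ∧
          (i = 2 * α - k ∨ i = 2 * α + 1 - k) := by
      intro k hk1 hk2
      obtain ⟨w, hw⟩ := hfsurj (2 * α + 1) (by omega) le_rfl
      obtain ⟨p, q, hB, hq, hp⟩ :=
        cross_lemma B₂ f k w b (hB₂.2.2.2 w) (by omega) (by omega)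
      exact key B₂ hB₂.1 k p q hB hq hp (by omega)
    -- alternating induction on the cut level
    have main : ∀ k, 1 ≤ k → k ≤ 2 * α - 1 →
        (k % 2 = 1 → B₁ (x (2 * α - k)) (y (2 * α - k))) ∧
        (k % 2 = 0 → B₂ (x (2 * α - k)) (y (2 * α - k))) := by
      intro k
      induction k using Nat.strong_induction_on with
      | _ k ih =>
        intro hk1 hk2
        constructor
        · intro hodd
          obtain ⟨i, hi1, hi2, hB, hcase⟩ := crossB₁ k hk1 hk2
          rcases hcase with h | h
          · rwa [h] at hB
          · exfalso
            have hk2' : 2 ≤ k := by omega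
            have h2 := (ih (k - 1) (by omega) (by omega) (by omega)).2 (by omega)
            have heq : 2 * α - (k - 1) = i := by omega
            rw [heq] at h2
            exact hno i hi1 hi2 hB h2
        · intro heven
          have hk2' : 2 ≤ k := by omega
          obtain ⟨i, hi1, hi2, hB, hcase⟩ := crossB₂ k hk2' (by omega)
          rcases hcase with h | h
          · rwa [h] at hB
          · exfalso
            have h1 := (ih (k - 1) (by omega) (by omega) (by omega)).1 (by omega)
            have heq : 2 * α - (k - 1) = i := by omega
            rw [heq] at h1
            exact hno i hi1 hi2 h1 hB
    -- final contradiction at the cut k = 2α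
    obtain ⟨i, hi1, hi2, hB2, hcase⟩ := crossB₂ (2 * α) (by omega) le_rfl
    have hi : i = 1 := by omega
    subst hi
    have h1 := (main (2 * α - 1) (by omega) le_rfl).1 (by omega)
    have heq : 2 * α - (2 * α - 1) = 1 := by omega
    rw [heq] at h1
    exact hno 1 hi1 hi2 h1 hB2
  refine ⟨main1, ?_⟩
  rintro ⟨B₁, B₂, h1, h2, hd⟩
  obtain ⟨i, -, -, hb1, hb2⟩ := main1 B₁ B₂ h1 h2
  exact hd (x i) (y i) ⟨hb1, hb2⟩
end

section
/- Let S be a strong semicomplete digraph and let a, b be vertices (possibly a = b) such that (S,a,b) is of type B: there is a partition V_1,…,V_{β+1} of V(S) for some β ≥ 1 with b ∈ V_1, a ∈ V_{β+1}, all arcs between V_i and V_j with i < j go from V_i to V_j except for precisely one 'backward' arc x_i y_i from V_{β+2−i} to V_{β+1−i} for each i ∈ [β]. Then every pair consisting of an out-branching rooted at a and an in-branching rooted at b in S must contain every backward arc x_i y_i in both branchings (hence both branchings share all β backward arcs), so S has no good (a,b)-pair. -/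
/-- The composition `D[H₁,…,Hₙ]` of a digraph `D` on index type `ι` with digraphs
`H i` on types `β i`: vertices are `Σ i, β i`; arcs are the internal arcs of each
`H i` together with all arcs from `β i` to `β j` whenever `D i j` and `i ≠ j`. -/
lemma crossing_aux {V : Type*} {R : V → V → Prop} {P : V → Prop} {u v : V}
    (h : Relation.ReflTransGen R u v) :
    P u → ¬ P v → ∃ p q, R p q ∧ P p ∧ ¬ P q := by
  induction h with
  | refl => intro hu hv; exact absurd hu hv
  | @tail c d h' step ih =>
    intro hu hv
    by_cases hc : P c
    · exact ⟨c, d, step, hc, hv⟩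
    · exact ih hu hc

/-- If the strong semicomplete digraph `S` (arc relation `A`) is of type B with
respect to `(a,b)` — witnessed by a `1`-based partition index function `f` onto
`{1,…,m+1}` with `b` in part `1`, `a` in part `m+1`, and precisely one backward
arc `x i y i` from part `m+2−i` to part `m+1−i` for each `i ∈ [m]`, all other
arcs between distinct parts going forward — then every out-branching rooted at
`a` and every in-branching rooted at `b` contain all the backward arcs; in
particular `S` has no good `(a,b)`-pair. -/
theorem stmt_12 {V : Type*} [Fintype V] (A : V → V → Prop) (a b : V)
    (hsemi : ∀ p q : V, p ≠ q → A p q ∨ A q p) (hstrong : IsStrong A)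
    (m : ℕ) (hm : 1 ≤ m)
    (f : V → ℕ) (hf : ∀ w, 1 ≤ f w ∧ f w ≤ m + 1)
    (hfsurj : ∀ j, 1 ≤ j → j ≤ m + 1 → ∃ w, f w = j)
    (hb : f b = 1) (ha : f a = m + 1)
    (x y : ℕ → V)
    (hxy : ∀ i, 1 ≤ i → i ≤ m →
      f (x i) = m + 2 - i ∧ f (y i) = m + 1 - i ∧ A (x i) (y i))
    (hforward : ∀ p q, A p q → f q < f p →
      ∃ i, 1 ≤ i ∧ i ≤ m ∧ p = x i ∧ q = y i) :
    (∀ B₁ B₂, IsOutBranching A B₁ a → IsInBranching A B₂ b →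
      ∀ i, 1 ≤ i → i ≤ m → B₁ (x i) (y i) ∧ B₂ (x i) (y i)) ∧
    ¬ GoodPair A a b := by
  have key : ∀ B : V → V → Prop, (∀ p q, B p q → A p q) →
      Relation.ReflTransGen B a b → ∀ i, 1 ≤ i → i ≤ m → B (x i) (y i) := by
    intro B hBA hab i hi1 him
    obtain ⟨p, q, hpq, hp, hq⟩ :=
      crossing_aux (P := fun w => m + 2 - i ≤ f w) hab
        (by simp only [ha]; omega) (by simp only [hb]; omega)
    simp only [not_le] at hq
    obtain ⟨j, hj1, hjm, hpj, hqj⟩ := hforward p q (hBA p q hpq) (by omega)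
    obtain ⟨hfx, hfy, -⟩ := hxy j hj1 hjm
    rw [hpj] at hp; rw [hqj] at hq
    rw [hfx] at hp; rw [hfy] at hq
    have : j = i := by omega
    subst this; rw [hpj, hqj] at hpq; exact hpq
  have main : ∀ B₁ B₂, IsOutBranching A B₁ a → IsInBranching A B₂ b →
      ∀ i, 1 ≤ i → i ≤ m → B₁ (x i) (y i) ∧ B₂ (x i) (y i) := by
    intro B₁ B₂ h1 h2 i hi1 him
    exact ⟨key B₁ h1.1 (h1.2.2.2 b) i hi1 him,
      key B₂ h2.1 (h2.2.2.2 a) i hi1 him⟩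
  refine ⟨main, ?_⟩
  rintro ⟨B₁, B₂, h1, h2, hd⟩
  obtain ⟨c1, c2⟩ := main B₁ B₂ h1 h2 1 le_rfl hm
  exact hd _ _ ⟨c1, c2⟩
end

section
/- Let S be a strong semicomplete digraph and let u be a vertex such that S has no good (u,u)-pair. Let X, Y, Z be the partition of V(S)−u where N⁺_S(u) = X ∪ Z, N⁻_S(u) = Y ∪ Z, and Z is the set of vertices forming a 2-cycle with u. Then there is precisely one arc leaving the terminal strong component of S⟨X⟩, precisely one arc entering the initial strong component of S⟨Y⟩, and these two arcs are the same arc e; consequently (S,u,u) is of type A with α = 1 and backward arc e. -/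
namespace Stmt16Aux


/-- Paths of a given length. -/
def plen {V : Type*} (R : V → V → Prop) : ℕ → V → V → Prop
  | 0, x, y => x = y
  | n+1, x, y => ∃ z, R x z ∧ plen R n z y

theorem plen_snoc {V : Type*} {R : V → V → Prop} {n : ℕ} {x y z : V}
    (h : plen R n x y) (h2 : R y z) : plen R (n+1) x z := by
  induction n generalizing x with
  | zero => exact ⟨z, h ▸ h2, rfl⟩
  | succ n ih => obtain ⟨w, hw, hp⟩ := h; exact ⟨w, hw, ih hp⟩

theorem reach_iff_plen {V : Type*} {R : V → V → Prop} {x y : V} :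
    Relation.ReflTransGen R x y ↔ ∃ n, plen R n x y := by
  constructor
  · intro h
    induction h with
    | refl => exact ⟨0, rfl⟩
    | tail hab hbc ih => obtain ⟨n, hn⟩ := ih; exact ⟨n+1, plen_snoc hn hbc⟩
  · rintro ⟨n, hn⟩
    induction n generalizing x with
    | zero => exact hn ▸ Relation.ReflTransGen.refl
    | succ n ih => obtain ⟨z, hz, hp⟩ := hn; exact Relation.ReflTransGen.head hz (ih hp)

/-- In-branching on the set of vertices that reach `r`. -/
theorem exists_inb {V : Type*} (R : V → V → Prop) (r : V) :
    ∃ T : V → V → Prop,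
      (∀ x y, T x y → R x y) ∧
      (∀ x, x ≠ r → Relation.ReflTransGen R x r → ∃! y, T x y) ∧
      (∀ x y, T x y → x ≠ r) ∧
      (∀ z, Relation.ReflTransGen R z r → Relation.ReflTransGen T z r) := by
  classical
  set D : V → ℕ := fun x => sInf {n | plen R n x r} with hDdef
  have hkey : ∀ x, x ≠ r → Relation.ReflTransGen R x r →
      ∃ y, R x y ∧ Relation.ReflTransGen R y r ∧ D y < D x := by
    intro x hx hreach
    obtain ⟨n, hn⟩ := reach_iff_plen.mp hreach
    have hmem : plen R (D x) x r := by
      have h := Nat.sInf_mem (⟨n, hn⟩ : Set.Nonempty {n : ℕ | plen R n x r})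
      exact h
    have hpos : D x ≠ 0 := by
      intro h0
      rw [h0] at hmem
      exact hx hmem
    obtain ⟨m, hm⟩ := Nat.exists_eq_succ_of_ne_zero hpos
    rw [hm] at hmem
    obtain ⟨y, hxy, hy⟩ := hmem
    refine ⟨y, hxy, reach_iff_plen.mpr ⟨m, hy⟩, ?_⟩
    have h1 : D y ≤ m := Nat.sInf_le hy
    omega
  let T : V → V → Prop := fun x y =>
    ∃ h : x ≠ r ∧ Relation.ReflTransGen R x r, y = Classical.choose (hkey x h.1 h.2)
  have hTstep : ∀ x (h1 : x ≠ r) (h2 : Relation.ReflTransGen R x r),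
      T x (Classical.choose (hkey x h1 h2)) := fun x h1 h2 => ⟨⟨h1, h2⟩, rfl⟩
  refine ⟨T, ?_, ?_, ?_, ?_⟩
  · rintro x y ⟨h, rfl⟩
    exact (Classical.choose_spec (hkey x h.1 h.2)).1
  · intro x hx hr
    exact ⟨_, hTstep x hx hr, by rintro y ⟨h', rfl⟩; rfl⟩
  · rintro x y ⟨h, rfl⟩
    exact h.1
  · intro z hz
    have main : ∀ n z, D z ≤ n → Relation.ReflTransGen R z r →
        Relation.ReflTransGen T z r := by
      intro n
      induction n with
      | zero =>
        intro z hz0 hr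
        have hmem : plen R (D z) z r := by
          obtain ⟨n, hn⟩ := reach_iff_plen.mp hr
          have h := Nat.sInf_mem (⟨n, hn⟩ : Set.Nonempty {n : ℕ | plen R n z r})
          exact h
        have : D z = 0 := Nat.le_zero.mp hz0
        rw [this] at hmem
        exact hmem ▸ Relation.ReflTransGen.refl
      | succ n ih =>
        intro z hzn hr
        by_cases hzr : z = r
        · exact hzr ▸ Relation.ReflTransGen.refl
        · have hs := Classical.choose_spec (hkey z hzr hr)
          refine Relation.ReflTransGen.head (hTstep z hzr hr) (ih _ ?_ hs.2.1)
          have := hs.2.2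
          omega
    exact main (D z) z le_rfl hz

/-- Out-branching version, by flipping. -/
theorem exists_outb {V : Type*} (R : V → V → Prop) (r : V) :
    ∃ T : V → V → Prop,
      (∀ x y, T x y → R x y) ∧
      (∀ y, y ≠ r → Relation.ReflTransGen R r y → ∃! x, T x y) ∧
      (∀ x y, T x y → y ≠ r) ∧
      (∀ z, Relation.ReflTransGen R r z → Relation.ReflTransGen T r z) := by
  obtain ⟨T, hT1, hT2, hT3, hT4⟩ := exists_inb (fun p q => R q p) r
  refine ⟨fun x y => T y x, fun x y h => hT1 y x h, fun y hy hr => hT2 y hy ?_, fun x y h => hT3 y x h, fun z hz => ?_⟩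
  · exact (Relation.reflTransGen_swap).mpr hr
  · have h1 : Relation.ReflTransGen (fun p q => R q p) z r :=
      (Relation.reflTransGen_swap).mpr hz
    have h2 := hT4 z h1
    exact (Relation.reflTransGen_swap).mp h2

/-- On a path from outside `M` into `M`, some arc crosses into `M`. -/
theorem cross {V : Type*} {A : V → V → Prop} {s t : V}
    (h : Relation.ReflTransGen A s t) (M : Set V) (hs : s ∉ M) :
    t ∈ M → ∃ p q, A p q ∧ p ∉ M ∧ q ∈ M := by
  induction h with
  | refl => exact fun ht => absurd ht hs
  | @tail b c hab hbc ih =>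
    intro ht
    by_cases hb : b ∈ M
    · exact ih hb
    · exact ⟨b, c, hbc, hb, ht⟩

/-- Every finite nonempty semicomplete digraph has a vertex reachable from all
others within the set. -/
theorem exists_top {V : Type*} (A : V → V → Prop)
    (hsemi : ∀ p q : V, p ≠ q → A p q ∨ A q p) (W : Set V) (hfin : W.Finite)
    (hne : W.Nonempty) :
    ∃ w ∈ W, ∀ z ∈ W, Relation.ReflTransGen (fun p q => A p q ∧ p ∈ W ∧ q ∈ W) z w := by
  refine Set.Finite.induction_on
    (motive := fun S _ => S.Nonempty →
      ∃ w ∈ S, ∀ z ∈ S, Relation.ReflTransGen (fun p q => A p q ∧ p ∈ S ∧ q ∈ S) z w)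
    W hfin (fun h => absurd h (by simp)) ?_ hne
  rintro a s ha hsfin ih -
  rcases s.eq_empty_or_nonempty with rfl | hsne
  · refine ⟨a, Set.mem_insert _ _, fun z hz => ?_⟩
    rcases hz with rfl | hz
    · exact Relation.ReflTransGen.refl
    · exact absurd hz (Set.notMem_empty z)
  · obtain ⟨w, hw, hall⟩ := ih hsne
    have haw : a ≠ w := fun h => ha (h ▸ hw)
    have hmono : ∀ p q, (A p q ∧ p ∈ s ∧ q ∈ s) →
        (A p q ∧ p ∈ insert a s ∧ q ∈ insert a s) :=
      fun p q ⟨h1, h2, h3⟩ => ⟨h1, Set.mem_insert_of_mem _ h2, Set.mem_insert_of_mem _ h3⟩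
    rcases hsemi a w haw with h | h
    · refine ⟨w, Set.mem_insert_of_mem _ hw, fun z hz => ?_⟩
      rcases hz with rfl | hz
      · exact Relation.ReflTransGen.single ⟨h, Set.mem_insert _ _, Set.mem_insert_of_mem _ hw⟩
      · exact Relation.ReflTransGen.mono hmono _ _ (hall z hz)
    · refine ⟨a, Set.mem_insert _ _, fun z hz => ?_⟩
      rcases hz with rfl | hz
      · exact Relation.ReflTransGen.refl
      · exact (Relation.ReflTransGen.mono hmono _ _ (hall z hz)).tail ⟨h, Set.mem_insert_of_mem _ hw, Set.mem_insert _ _⟩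

/-- Dual: a vertex reaching all others within the set. -/
theorem exists_bot {V : Type*} (A : V → V → Prop)
    (hsemi : ∀ p q : V, p ≠ q → A p q ∨ A q p) (W : Set V) (hfin : W.Finite)
    (hne : W.Nonempty) :
    ∃ w ∈ W, ∀ z ∈ W, Relation.ReflTransGen (fun p q => A p q ∧ p ∈ W ∧ q ∈ W) w z := by
  obtain ⟨w, hw, hall⟩ := exists_top (fun p q => A q p)
    (fun p q hpq => (hsemi p q hpq).symm) W hfin hne
  refine ⟨w, hw, fun z hz => ?_⟩
  have h := Relation.ReflTransGen.mono (p := Function.swap fun p q => A p q ∧ p ∈ W ∧ q ∈ W)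
    (fun a b ⟨h1, h2, h3⟩ => ⟨h1, h3, h2⟩) _ _ (hall z hz)
  exact (Relation.reflTransGen_swap).mp h


theorem buildE2 {V : Type*} (A : V → V → Prop) (X : Set V) (x0 c : V)
    (hx0 : x0 ∈ X)
    (hreach : ∀ z ∈ X, Relation.ReflTransGen (fun p q => A p q ∧ p ∈ X ∧ q ∈ X) z x0)
    (hc : A x0 c) (hcX : c ∉ X) :
    ∃ E₂ : V → V → Prop,
      (∀ x y, E₂ x y → A x y) ∧
      (∀ x y, E₂ x y → x ∈ X) ∧
      (∀ x ∈ X, ∃! y, E₂ x y) ∧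
      (∀ x ∈ X, Relation.ReflTransGen E₂ x c) ∧
      (∀ x y, E₂ x y → (x ∈ X ∧ y ∈ X) ∨ (x = x0 ∧ y = c)) := by
  obtain ⟨T, hT1, hT2, hT3, hT4⟩ := exists_inb (fun p q => A p q ∧ p ∈ X ∧ q ∈ X) x0
  refine ⟨fun x y => T x y ∨ (x = x0 ∧ y = c), ?_, ?_, ?_, ?_, ?_⟩
  · rintro x y (h | ⟨rfl, rfl⟩)
    · exact (hT1 x y h).1
    · exact hc
  · rintro x y (h | ⟨rfl, rfl⟩)
    · exact (hT1 x y h).2.1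
    · exact hx0
  · intro x hx
    by_cases hxx : x = x0
    · subst hxx
      refine ⟨c, Or.inr ⟨rfl, rfl⟩, ?_⟩
      rintro y (h | ⟨_, rfl⟩)
      · exact absurd rfl (hT3 x y h)
      · rfl
    · obtain ⟨y, hy, hu⟩ := hT2 x hxx (hreach x hx)
      refine ⟨y, Or.inl hy, ?_⟩
      rintro y' (h' | ⟨rfl, _⟩)
      · exact hu y' h'
      · exact absurd rfl hxx
  · intro x hx
    exact (Relation.ReflTransGen.mono (fun p q h => Or.inl h) _ _ (hT4 x (hreach x hx))).tail (Or.inr ⟨rfl, rfl⟩)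
  · rintro x y (h | ⟨rfl, rfl⟩)
    · exact Or.inl ⟨(hT1 x y h).2.1, (hT1 x y h).2.2⟩
    · exact Or.inr ⟨rfl, rfl⟩

theorem buildE1 {V : Type*} (A : V → V → Prop) (Y : Set V) (y0 a : V)
    (hy0 : y0 ∈ Y)
    (hreach : ∀ z ∈ Y, Relation.ReflTransGen (fun p q => A p q ∧ p ∈ Y ∧ q ∈ Y) y0 z)
    (ha : A a y0) (haY : a ∉ Y) :
    ∃ E₁ : V → V → Prop,
      (∀ x y, E₁ x y → A x y) ∧
      (∀ x y, E₁ x y → y ∈ Y) ∧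
      (∀ y ∈ Y, ∃! x, E₁ x y) ∧
      (∀ y ∈ Y, Relation.ReflTransGen E₁ a y) ∧
      (∀ x y, E₁ x y → (x ∈ Y ∧ y ∈ Y) ∨ (x = a ∧ y = y0)) := by
  obtain ⟨T, hT1, hT2, hT3, hT4⟩ := exists_outb (fun p q => A p q ∧ p ∈ Y ∧ q ∈ Y) y0
  refine ⟨fun x y => T x y ∨ (x = a ∧ y = y0), ?_, ?_, ?_, ?_, ?_⟩
  · rintro x y (h | ⟨rfl, rfl⟩)
    · exact (hT1 x y h).1
    · exact ha
  · rintro x y (h | ⟨rfl, rfl⟩)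
    · exact (hT1 x y h).2.2
    · exact hy0
  · intro y hy
    by_cases hyy : y = y0
    · subst hyy
      refine ⟨a, Or.inr ⟨rfl, rfl⟩, ?_⟩
      rintro x (h | ⟨rfl, _⟩)
      · exact absurd rfl (hT3 x y h)
      · rfl
    · obtain ⟨x, hx, hu⟩ := hT2 y hyy (hreach y hy)
      refine ⟨x, Or.inl hx, ?_⟩
      rintro x' (h' | ⟨_, rfl⟩)
      · exact hu x' h'
      · exact absurd rfl hyy
  · intro y hy
    exact Relation.ReflTransGen.head (Or.inr ⟨rfl, rfl⟩)
      (Relation.ReflTransGen.mono (fun p q h => Or.inl h) _ _ (hT4 y (hreach y hy)))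
  · rintro x y (h | ⟨rfl, rfl⟩)
    · exact Or.inl ⟨(hT1 x y h).2.1, (hT1 x y h).2.2⟩
    · exact Or.inr ⟨rfl, rfl⟩




theorem pair_lemma {V : Type*} (A : V → V → Prop) (u : V) (P Q : Set V)
    (hP : ∀ w ∈ P, A u w) (hQ : ∀ w ∈ Q, A w u)
    (hcov : ∀ w, w ≠ u → w ∈ P ∨ w ∈ Q)
    (huP : u ∉ P) (huQ : u ∉ Q)
    (E₁ E₂ : V → V → Prop)
    (hE₁A : ∀ x y, E₁ x y → A x y)
    (hE₁t : ∀ x y, E₁ x y → y ∈ Q ∧ y ∉ P)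
    (hE₁u : ∀ y, y ∉ P → y ≠ u → ∃! x, E₁ x y)
    (hE₁r : ∀ y, y ∉ P → y ≠ u →
      Relation.ReflTransGen (fun p q => (p = u ∧ q ∈ P) ∨ E₁ p q) u y)
    (hE₂A : ∀ x y, E₂ x y → A x y)
    (hE₂s : ∀ x y, E₂ x y → x ∈ P ∧ x ∉ Q)
    (hE₂u : ∀ x, x ∉ Q → x ≠ u → ∃! y, E₂ x y)
    (hE₂r : ∀ x, x ∉ Q → x ≠ u →
      Relation.ReflTransGen (fun p q => (p ∈ Q ∧ q = u) ∨ E₂ p q) x u)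
    (hdisj : ArcDisjoint E₁ E₂) : GoodPair A u u := by
  refine ⟨fun x y => (x = u ∧ y ∈ P) ∨ E₁ x y,
          fun x y => (x ∈ Q ∧ y = u) ∨ E₂ x y, ⟨?_, ?_, ?_, ?_⟩, ⟨?_, ?_, ?_, ?_⟩, ?_⟩
  · rintro x y (⟨rfl, hy⟩ | h)
    · exact hP y hy
    · exact hE₁A x y h
  · intro w hw
    by_cases hwP : w ∈ P
    · refine ⟨u, Or.inl ⟨rfl, hwP⟩, ?_⟩
      rintro x (⟨rfl, _⟩ | h)
      · rfl
      · exact absurd hwP (hE₁t x w h).2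
    · obtain ⟨x, hx, hux⟩ := hE₁u w hwP hw
      refine ⟨x, Or.inr hx, ?_⟩
      rintro x' (⟨rfl, hP'⟩ | h')
      · exact absurd hP' hwP
      · exact hux x' h'
  · rintro x (⟨_, h⟩ | h)
    · exact huP h
    · exact huQ (hE₁t x u h).1
  · intro w
    by_cases hwu : w = u
    · exact hwu ▸ Relation.ReflTransGen.refl
    by_cases hwP : w ∈ P
    · exact Relation.ReflTransGen.single (Or.inl ⟨rfl, hwP⟩)
    · exact hE₁r w hwP hwu
  · rintro x y (⟨hx, rfl⟩ | h)
    · exact hQ x hx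
    · exact hE₂A x y h
  · intro w hw
    by_cases hwQ : w ∈ Q
    · refine ⟨u, Or.inl ⟨hwQ, rfl⟩, ?_⟩
      rintro y (⟨_, rfl⟩ | h)
      · rfl
      · exact absurd hwQ (hE₂s w y h).2
    · obtain ⟨y, hy, huy⟩ := hE₂u w hwQ hw
      refine ⟨y, Or.inr hy, ?_⟩
      rintro y' (⟨hQ', _⟩ | h')
      · exact absurd hQ' hwQ
      · exact huy y' h'
  · rintro y (⟨h, _⟩ | h)
    · exact huQ h
    · exact huP (hE₂s u y h).1
  · intro w
    by_cases hwu : w = u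
    · exact hwu ▸ Relation.ReflTransGen.refl
    by_cases hwQ : w ∈ Q
    · exact Relation.ReflTransGen.single (Or.inl ⟨hwQ, rfl⟩)
    · exact hE₂r w hwQ hwu
  · rintro x y ⟨h1, h2⟩
    rcases h1 with ⟨rfl, hyP⟩ | h1
    · rcases h2 with ⟨hxQ, rfl⟩ | h2
      · exact huQ hxQ
      · exact huP (hE₂s _ _ h2).1
    · rcases h2 with ⟨_, rfl⟩ | h2
      · exact huQ (hE₁t _ _ h1).1
      · exact hdisj x y ⟨h1, h2⟩

end Stmt16Aux

open Stmt16Aux in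
/-- If a strong semicomplete digraph `S` has no good `(u,u)`-pair, then, with
`X` the out-neighbors, `Y` the in-neighbors and `Z` the 2-cycle neighbors of `u`,
there is precisely one arc leaving the terminal strong component of `S⟨X⟩`,
precisely one arc entering the initial strong component of `S⟨Y⟩`, and these
coincide; consequently `(S,u,u)` is of type A with `α = 1` and this backward arc. -/
theorem stmt_16 {V : Type*} [Fintype V] (A : V → V → Prop) (u : V)
    (hsemi : ∀ p q : V, p ≠ q → A p q ∨ A q p) (hstrong : IsStrong A)
    (hno : ¬ GoodPair A u u) :
    let X : Set V := {w | w ≠ u ∧ A u w ∧ ¬ A w u}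
    let Y : Set V := {w | w ≠ u ∧ A w u ∧ ¬ A u w}
    let TX : Set V := {w | w ∈ X ∧ ∀ z ∈ X,
      Relation.ReflTransGen (fun p q => A p q ∧ p ∈ X ∧ q ∈ X) z w}
    let IY : Set V := {w | w ∈ Y ∧ ∀ z ∈ Y,
      Relation.ReflTransGen (fun p q => A p q ∧ p ∈ Y ∧ q ∈ Y) w z}
    ∃ x0 y0 : V,
      {e : V × V | A e.1 e.2 ∧ e.1 ∈ TX ∧ e.2 ∉ TX} = {(x0, y0)} ∧
      {e : V × V | A e.1 e.2 ∧ e.1 ∉ IY ∧ e.2 ∈ IY} = {(x0, y0)} ∧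
      ∃ V₁ V₂ V₃ : Set V,
        V₁ ∪ V₂ ∪ V₃ = Set.univ ∧
        Disjoint V₁ V₂ ∧ Disjoint V₁ V₃ ∧ Disjoint V₂ V₃ ∧
        u ∈ V₂ ∧ x0 ∈ V₃ ∧ y0 ∈ V₁ ∧
        (∀ p q, A p q →
          (p ∈ V₁ ∧ q ∈ V₁) ∨ (p ∈ V₂ ∧ q ∈ V₂) ∨ (p ∈ V₃ ∧ q ∈ V₃) ∨
          (p ∈ V₁ ∧ q ∈ V₂) ∨ (p ∈ V₁ ∧ q ∈ V₃) ∨ (p ∈ V₂ ∧ q ∈ V₃) ∨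
          (p = x0 ∧ q = y0)) ∧
        (∀ z ∈ V₃, Relation.ReflTransGen
          (fun p q => A p q ∧ p ∈ V₃ ∧ q ∈ V₃) z x0) ∧
        (∀ z ∈ V₁, Relation.ReflTransGen
          (fun p q => A p q ∧ p ∈ V₁ ∧ q ∈ V₁) y0 z) := by
  intro X Y TX IY
  classical
  set P : Set V := {w | w ≠ u ∧ A u w} with hPdef
  set Q : Set V := {w | w ≠ u ∧ A w u} with hQdef
  have huX : u ∉ X := fun h => h.1 rfl
  have huY : u ∉ Y := fun h => h.1 rfl
  have huTX : u ∉ TX := fun h => huX h.1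
  have huIY : u ∉ IY := fun h => huY h.1
  have hXY : ∀ w, w ∈ X → w ∈ Y → False := fun w h1 h2 => h1.2.2 h2.2.1
  have huP : u ∉ P := fun h => h.1 rfl
  have huQ : u ∉ Q := fun h => h.1 rfl
  have hP : ∀ w ∈ P, A u w := fun w h => h.2
  have hQ : ∀ w ∈ Q, A w u := fun w h => h.2
  have hcov : ∀ w, w ≠ u → w ∈ P ∨ w ∈ Q := by
    intro w hw
    rcases hsemi u w (fun h => hw h.symm) with h | h
    · exact Or.inl ⟨hw, h⟩
    · exact Or.inr ⟨hw, h⟩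
  have hXPQ : ∀ w, w ∈ X ↔ w ∈ P ∧ w ∉ Q :=
    fun w => ⟨fun h => ⟨⟨h.1, h.2.1⟩, fun hq => h.2.2 hq.2⟩,
      fun h => ⟨h.1.1, h.1.2, fun haw => h.2 ⟨h.1.1, haw⟩⟩⟩
  have hYQP : ∀ w, w ∈ Y ↔ w ∈ Q ∧ w ∉ P :=
    fun w => ⟨fun h => ⟨⟨h.1, h.2.1⟩, fun hp => h.2.2 hp.2⟩,
      fun h => ⟨h.1.1, h.1.2, fun haw => h.2 ⟨h.1.1, haw⟩⟩⟩
  have E1pack : ∀ a b, A a b → b ∈ IY → a ∉ IY →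
      ∃ E₁ : V → V → Prop, (∀ x y, E₁ x y → A x y) ∧
        (∀ x y, E₁ x y → y ∈ Q ∧ y ∉ P) ∧
        (∀ y, y ∉ P → y ≠ u → ∃! x, E₁ x y) ∧
        (∀ y, y ∉ P → y ≠ u →
          Relation.ReflTransGen (fun p q => (p = u ∧ q ∈ P) ∨ E₁ p q) u y) ∧
        (∀ x y, E₁ x y → (x ∈ Y ∧ y ∈ Y) ∨ (x = a ∧ y = b)) := by
    intro a b hab hb ha
    have hbY : b ∈ Y := hb.1
    have hau : a ≠ u := fun h => hbY.2.2 (h ▸ hab)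
    have haY : a ∉ Y := by
      intro haY
      exact ha ⟨haY, fun z hz => Relation.ReflTransGen.head ⟨hab, haY, hbY⟩ (hb.2 z hz)⟩
    have haP : a ∈ P := by
      by_cases h : a ∈ P
      · exact h
      · exact absurd ((hYQP a).mpr ⟨(hcov a hau).resolve_left h, h⟩) haY
    obtain ⟨E₁, h1, h2, h3, h4, h5⟩ := buildE1 A Y b a hbY hb.2 hab haY
    refine ⟨E₁, h1, ?_, ?_, ?_, h5⟩
    · intro x y h
      exact (hYQP y).mp (h2 x y h)
    · intro y hyP hyu
      exact h3 y ((hYQP y).mpr ⟨(hcov y hyu).resolve_left hyP, hyP⟩)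
    · intro y hyP hyu
      have hyY : y ∈ Y := (hYQP y).mpr ⟨(hcov y hyu).resolve_left hyP, hyP⟩
      exact Relation.ReflTransGen.head (Or.inl ⟨rfl, haP⟩)
        (Relation.ReflTransGen.mono (fun p q h => Or.inr h) _ _ (h4 y hyY))
  have E2pack : ∀ x0 c, A x0 c → x0 ∈ TX → c ∉ TX →
      ∃ E₂ : V → V → Prop, (∀ x y, E₂ x y → A x y) ∧
        (∀ x y, E₂ x y → x ∈ P ∧ x ∉ Q) ∧
        (∀ x, x ∉ Q → x ≠ u → ∃! y, E₂ x y) ∧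
        (∀ x, x ∉ Q → x ≠ u →
          Relation.ReflTransGen (fun p q => (p ∈ Q ∧ q = u) ∨ E₂ p q) x u) ∧
        (∀ x y, E₂ x y → (x ∈ X ∧ y ∈ X) ∨ (x = x0 ∧ y = c)) := by
    intro x0 c hxc hx0 hc
    have hx0X : x0 ∈ X := hx0.1
    have hcu : c ≠ u := fun h => hx0X.2.2 (h ▸ hxc)
    have hcX : c ∉ X := by
      intro hcXm
      exact hc ⟨hcXm, fun z hz => (hx0.2 z hz).tail ⟨hxc, hx0X, hcXm⟩⟩
    have hcQ : c ∈ Q := by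
      by_cases h : c ∈ Q
      · exact h
      · exact absurd ((hXPQ c).mpr ⟨(hcov c hcu).resolve_right h, h⟩) hcX
    obtain ⟨E₂, h1, h2, h3, h4, h5⟩ := buildE2 A X x0 c hx0X hx0.2 hxc hcX
    refine ⟨E₂, h1, ?_, ?_, ?_, h5⟩
    · intro x y h
      exact (hXPQ x).mp (h2 x y h)
    · intro x hxQ hxu
      exact h3 x ((hXPQ x).mpr ⟨(hcov x hxu).resolve_right hxQ, hxQ⟩)
    · intro x hxQ hxu
      have hxX : x ∈ X := (hXPQ x).mpr ⟨(hcov x hxu).resolve_right hxQ, hxQ⟩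
      exact (Relation.ReflTransGen.mono (fun p q h => Or.inr h) _ _ (h4 x hxX)).tail (Or.inl ⟨hcQ, rfl⟩)
  have GP : ∀ a b x0 c, A a b → b ∈ IY → a ∉ IY → A x0 c → x0 ∈ TX → c ∉ TX →
      ¬(x0 = a ∧ c = b) → GoodPair A u u := by
    intro a b x0 c hab hb ha hxc hx0 hcT hne
    obtain ⟨E₁, e1A, e1t, e1u, e1r, e1s⟩ := E1pack a b hab hb ha
    obtain ⟨E₂, e2A, e2s, e2u, e2r, e2sh⟩ := E2pack x0 c hxc hx0 hcT
    refine pair_lemma A u P Q hP hQ hcov huP huQ E₁ E₂ e1A e1t e1u e1r e2A e2s e2u e2r ?_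
    rintro x y ⟨h1, h2⟩
    rcases e1s x y h1 with ⟨hx1, hy1⟩ | ⟨hxa, hyb⟩
    · rcases e2sh x y h2 with ⟨hx2, _⟩ | ⟨hxx0, _⟩
      · exact hXY x hx2 hx1
      · exact hXY x (by rw [hxx0]; exact hx0.1) hx1
    · rcases e2sh x y h2 with ⟨_, hy2⟩ | ⟨h3, h4⟩
      · exact hXY y hy2 (by rw [hyb]; exact hb.1)
      · exact hne ⟨h3.symm.trans hxa, h4.symm.trans hyb⟩
  have hE1bot : Y = ∅ → ∀ y, y ∉ P → y ≠ u → False := by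
    intro hY y h1 h2
    have : y ∈ Y := (hYQP y).mpr ⟨(hcov y h2).resolve_left h1, h1⟩
    rw [hY] at this
    exact this
  have hE2bot : X = ∅ → ∀ x, x ∉ Q → x ≠ u → False := by
    intro hX x h1 h2
    have : x ∈ X := (hXPQ x).mpr ⟨(hcov x h2).resolve_right h1, h1⟩
    rw [hX] at this
    exact this
  have hXne : X.Nonempty := by
    by_contra hX
    rw [Set.not_nonempty_iff_eq_empty] at hX
    apply hno
    rcases Set.eq_empty_or_nonempty Y with hY | hYne
    · exact pair_lemma A u P Q hP hQ hcov huP huQ (fun _ _ => False) (fun _ _ => False)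
        (fun _ _ h => h.elim) (fun _ _ h => h.elim)
        (fun y h1 h2 => (hE1bot hY y h1 h2).elim) (fun y h1 h2 => (hE1bot hY y h1 h2).elim)
        (fun _ _ h => h.elim) (fun _ _ h => h.elim)
        (fun x h1 h2 => (hE2bot hX x h1 h2).elim) (fun x h1 h2 => (hE2bot hX x h1 h2).elim)
        (fun _ _ h => h.2)
    · obtain ⟨b, hbY, hball⟩ := exists_bot A hsemi Y (Set.toFinite Y) hYne
      have hbIY : b ∈ IY := ⟨hbY, hball⟩
      obtain ⟨p, q, hpq, hp, hq⟩ := cross (hstrong u b) IY huIY hbIY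
      obtain ⟨E₁, e1A, e1t, e1u, e1r, _⟩ := E1pack p q hpq hq hp
      exact pair_lemma A u P Q hP hQ hcov huP huQ E₁ (fun _ _ => False) e1A e1t e1u e1r
        (fun _ _ h => h.elim) (fun _ _ h => h.elim)
        (fun x h1 h2 => (hE2bot hX x h1 h2).elim) (fun x h1 h2 => (hE2bot hX x h1 h2).elim)
        (fun _ _ h => h.2)
  have hYne : Y.Nonempty := by
    by_contra hY
    rw [Set.not_nonempty_iff_eq_empty] at hY
    apply hno
    obtain ⟨x, hxX, hxall⟩ := exists_top A hsemi X (Set.toFinite X) hXne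
    have hxTX : x ∈ TX := ⟨hxX, hxall⟩
    obtain ⟨p, q, hpq, hp, hq⟩ := cross (hstrong x u) TXᶜ (fun h => h hxTX) huTX
    obtain ⟨E₂, e2A, e2s, e2u, e2r, _⟩ := E2pack p q hpq (not_not.mp hp) hq
    exact pair_lemma A u P Q hP hQ hcov huP huQ (fun _ _ => False) E₂
      (fun _ _ h => h.elim) (fun _ _ h => h.elim)
      (fun y h1 h2 => (hE1bot hY y h1 h2).elim) (fun y h1 h2 => (hE1bot hY y h1 h2).elim)
      e2A e2s e2u e2r (fun _ _ h => h.1)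
  obtain ⟨x, hxX, hxall⟩ := exists_top A hsemi X (Set.toFinite X) hXne
  have hxTX : x ∈ TX := ⟨hxX, hxall⟩
  obtain ⟨p₀, q₀, hpq₀, hp₀, hq₀⟩ := cross (hstrong x u) TXᶜ (fun h => h hxTX) huTX
  have hp₀TX : p₀ ∈ TX := not_not.mp hp₀
  obtain ⟨b, hbY, hball⟩ := exists_bot A hsemi Y (Set.toFinite Y) hYne
  obtain ⟨a₀, b₀, hab₀, ha₀, hb₀⟩ := cross (hstrong u b) IY huIY ⟨hbY, hball⟩
  have hkey : ∀ p q a bb, A p q → p ∈ TX → q ∉ TX → A a bb → bb ∈ IY → a ∉ IY →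
      p = a ∧ q = bb := by
    intro p q a bb h1 h2 h3 h4 h5 h6
    by_contra hne
    exact hno (GP a bb p q h4 h5 h6 h1 h2 h3 hne)
  have hfe : p₀ = a₀ ∧ q₀ = b₀ := hkey p₀ q₀ a₀ b₀ hpq₀ hp₀TX hq₀ hab₀ hb₀ ha₀
  have hq₀IY : q₀ ∈ IY := hfe.2 ▸ hb₀
  have ha₀IY : p₀ ∉ IY := hfe.1 ▸ ha₀
  refine ⟨p₀, q₀, ?_, ?_, ?_⟩
  · ext ⟨p, q⟩
    simp only [Set.mem_setOf_eq, Set.mem_singleton_iff, Prod.mk.injEq]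
    constructor
    · rintro ⟨h1, h2, h3⟩
      have h := hkey p q a₀ b₀ h1 h2 h3 hab₀ hb₀ ha₀
      exact ⟨h.1.trans hfe.1.symm, h.2.trans hfe.2.symm⟩
    · rintro ⟨rfl, rfl⟩
      exact ⟨hpq₀, hp₀TX, hq₀⟩
  · ext ⟨p, q⟩
    simp only [Set.mem_setOf_eq, Set.mem_singleton_iff, Prod.mk.injEq]
    constructor
    · rintro ⟨h1, h2, h3⟩
      have h := hkey p₀ q₀ p q hpq₀ hp₀TX hq₀ h1 h3 h2
      exact ⟨h.1.symm, h.2.symm⟩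
    · rintro ⟨rfl, rfl⟩
      exact ⟨hpq₀, ha₀IY, hq₀IY⟩
  · refine ⟨IY, (IY ∪ TX)ᶜ, TX, ?_, ?_, ?_, ?_, ?_, hp₀TX, hq₀IY, ?_, ?_, ?_⟩
    · ext w
      simp only [Set.mem_union, Set.mem_compl_iff, Set.mem_univ, iff_true]
      tauto
    · rw [Set.disjoint_left]
      intro w hw hw2
      exact hw2 (Or.inl hw)
    · rw [Set.disjoint_left]
      intro w hw hw2
      exact hXY w hw2.1 hw.1
    · rw [Set.disjoint_left]
      intro w hw hw2
      exact hw (Or.inr hw2)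
    · exact fun h => h.elim (fun h => huIY h) (fun h => huTX h)
    · intro p q hpq
      by_cases hpT : p ∈ TX
      · by_cases hqT : q ∈ TX
        · exact Or.inr (Or.inr (Or.inl ⟨hpT, hqT⟩))
        · have h := hkey p q a₀ b₀ hpq hpT hqT hab₀ hb₀ ha₀
          exact Or.inr (Or.inr (Or.inr (Or.inr (Or.inr (Or.inr
            ⟨h.1.trans hfe.1.symm, h.2.trans hfe.2.symm⟩)))))
      · by_cases hqI : q ∈ IY
        · by_cases hpI : p ∈ IY
          · exact Or.inl ⟨hpI, hqI⟩
          · have h := hkey p₀ q₀ p q hpq₀ hp₀TX hq₀ hpq hqI hpI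
            exact Or.inr (Or.inr (Or.inr (Or.inr (Or.inr (Or.inr
              ⟨h.1.symm, h.2.symm⟩)))))
        · by_cases hpI : p ∈ IY
          · by_cases hqT : q ∈ TX
            · exact Or.inr (Or.inr (Or.inr (Or.inr (Or.inl ⟨hpI, hqT⟩))))
            · exact Or.inr (Or.inr (Or.inr (Or.inl
                ⟨hpI, fun h => h.elim (fun h => hqI h) (fun h => hqT h)⟩)))
          · by_cases hqT : q ∈ TX
            · exact Or.inr (Or.inr (Or.inr (Or.inr (Or.inr (Or.inl
                ⟨fun h => h.elim (fun h => hpI h) (fun h => hpT h), hqT⟩)))))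
            · exact Or.inr (Or.inl
                ⟨fun h => h.elim (fun h => hpI h) (fun h => hpT h),
                 fun h => h.elim (fun h => hqI h) (fun h => hqT h)⟩)
    · intro z hz
      have base : Relation.ReflTransGen (fun p q => A p q ∧ p ∈ X ∧ q ∈ X) z p₀ :=
        hp₀TX.2 z hz.1
      have H : ∀ v, Relation.ReflTransGen (fun p q => A p q ∧ p ∈ X ∧ q ∈ X) v p₀ →
          v ∈ TX → Relation.ReflTransGen (fun p q => A p q ∧ p ∈ TX ∧ q ∈ TX) v p₀ := by
        intro v h
        induction h using Relation.ReflTransGen.head_induction_on with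
        | refl => exact fun _ => Relation.ReflTransGen.refl
        | @head a c h' hrest ih =>
          intro haT
          have hcT : c ∈ TX := ⟨h'.2.2, fun z' hz' => (haT.2 z' hz').tail h'⟩
          exact Relation.ReflTransGen.head ⟨h'.1, haT, hcT⟩ (ih hcT)
      exact H z base hz
    · intro z hz
      have base : Relation.ReflTransGen (fun p q => A p q ∧ p ∈ Y ∧ q ∈ Y) q₀ z :=
        hq₀IY.2 z hz.1
      have H : ∀ v, Relation.ReflTransGen (fun p q => A p q ∧ p ∈ Y ∧ q ∈ Y) v z →
          v ∈ IY → Relation.ReflTransGen (fun p q => A p q ∧ p ∈ IY ∧ q ∈ IY) v z := by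
        intro v h
        induction h using Relation.ReflTransGen.head_induction_on with
        | refl => exact fun _ => Relation.ReflTransGen.refl
        | @head a c h' hrest ih =>
          intro hvI
          have hcI : c ∈ IY := ⟨h'.2.2, fun z' hz' => hrest.trans (hz.2 z' hz')⟩
          exact Relation.ReflTransGen.head ⟨h'.1, hvI, hcI⟩ (ih hcI)
      exact H q₀ base hq₀IY
end
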